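/- arXiv:2305.04806 — 5 statements merged into one kernel-verified Lean document; each statement's English description precedes it below -/
import Mathlib

section
/- Let n and r be non-negative integers with n − r odd. If every non-trivial element of A_{n−r} is covered by the one-part partition (n−r)¹ of n−r, then every non-trivial element of A_n having at least r fixed points is covered by the one-part partition n¹ of n. -/
open Equiv Pointwise

/-- `g ∈ A_n` is covered by the one-part partition `n¹` if whenever `C` and `D` are
`A_n`-conjugacy classes consisting of `n`-cycles, one has `g ∈ C * D`; equivalently,
for all `n`-cycles `x, y ∈ A_n` there are `A_n`-conjugates `c` of `x` and `d` of `y`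
with `g = c * d`. -/
def CoveredByNCycles (n : ℕ) (g : alternatingGroup (Fin n)) : Prop :=
  ∀ x y : alternatingGroup (Fin n),
    (↑x : Equiv.Perm (Fin n)).IsCycle → (↑x : Equiv.Perm (Fin n)).support.card = n →
    (↑y : Equiv.Perm (Fin n)).IsCycle → (↑y : Equiv.Perm (Fin n)).support.card = n →
    ∃ c d : alternatingGroup (Fin n), IsConj x c ∧ IsConj y d ∧ g = c * d

section Aux

open Equiv.Perm Finset

variable {A : Type*} [DecidableEq A] [Fintype A]

set_option linter.unusedSectionVars false

theorem Equiv.Perm.inv_apply_self (f : Perm A) (x : A) : f⁻¹ (f x) = x := f.symm_apply_apply x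

theorem Equiv.Perm.apply_inv_self (f : Perm A) (x : A) : f (f⁻¹ x) = x := f.apply_symm_apply x

/-- conjugation by a permutation fixing the support pointwise does nothing -/
lemma conj_eq_self_of_fix_support (t π : Perm A) (h : ∀ x ∈ t.support, π x = x) :
    π * t * π⁻¹ = t := by
  have hinv : ∀ x ∈ t.support, π⁻¹ x = x := by
    intro x hx
    conv_lhs => rw [← h x hx]
    exact Equiv.Perm.inv_apply_self π x
  ext x
  simp only [Equiv.Perm.coe_mul, Function.comp_apply]
  by_cases hx : x ∈ t.support
  · rw [hinv x hx, h (t x) (Equiv.Perm.apply_mem_support.mpr hx)]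
  · have hx' : t x = x := by simpa [Equiv.Perm.mem_support, not_not] using hx
    have hπx : π⁻¹ x ∉ t.support := by
      intro hmem
      have h1 : π (π⁻¹ x) = π⁻¹ x := h _ hmem
      rw [Equiv.Perm.apply_inv_self] at h1
      rw [h1] at hx
      exact hx hmem
    have h2 : t (π⁻¹ x) = π⁻¹ x := by
      simpa [Equiv.Perm.mem_support, not_not] using hπx
    rw [h2, Equiv.Perm.apply_inv_self, hx']

/-- a nontrivial power (below the order) of a cycle moves every point of the support -/
lemma cycle_pow_apply_ne {t : Perm A} (ht : t.IsCycle) {a : A} (ha : t a ≠ a) {j : ℕ}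
    (h0 : 0 < j) (hj : j < orderOf t) : (t ^ j) a ≠ a := by
  intro hEq
  have h1 : t ^ j = 1 := (ht.pow_eq_one_iff' ha).mpr hEq
  have := orderOf_dvd_of_pow_eq_one h1
  exact absurd (Nat.le_of_dvd h0 this) (not_le.mpr hj)

/-- product of two cycles whose supports meet in exactly one point is a cycle with
support the union -/
lemma isCycle_mul_of_inter_eq_singleton {σ τ : Perm A} (hσ : σ.IsCycle) (hτ : τ.IsCycle)
    {a : A} (hint : σ.support ∩ τ.support = {a}) :
    (σ * τ).IsCycle ∧ (σ * τ).support = σ.support ∪ τ.support := by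
  have haσ : a ∈ σ.support := by
    have : a ∈ σ.support ∩ τ.support := by rw [hint]; exact Finset.mem_singleton_self a
    exact (Finset.mem_inter.mp this).1
  have haτ : a ∈ τ.support := by
    have : a ∈ σ.support ∩ τ.support := by rw [hint]; exact Finset.mem_singleton_self a
    exact (Finset.mem_inter.mp this).2
  have haσ' : σ a ≠ a := Equiv.Perm.mem_support.mp haσ
  have haτ' : τ a ≠ a := Equiv.Perm.mem_support.mp haτ
  -- every point of the union is moved
  have moved : ∀ x, x ∈ σ.support ∪ τ.support → (σ * τ) x ≠ x := by
    intro x hx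
    rw [Equiv.Perm.mul_apply]
    by_cases hxτ : x ∈ τ.support
    · by_cases hτxσ : τ x ∈ σ.support
      · have hτxa : τ x = a := by
          have : τ x ∈ σ.support ∩ τ.support :=
            Finset.mem_inter.mpr ⟨hτxσ, Equiv.Perm.apply_mem_support.mpr hxτ⟩
          rw [hint] at this; exact Finset.mem_singleton.mp this
        rw [hτxa]
        intro hEq
        have hxσ : x ∈ σ.support := by rw [← hEq]; exact Equiv.Perm.apply_mem_support.mpr haσ
        have : x ∈ σ.support ∩ τ.support := Finset.mem_inter.mpr ⟨hxσ, hxτ⟩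
        rw [hint] at this
        have hxa : x = a := Finset.mem_singleton.mp this
        rw [hxa] at hxτ
        exact haτ' (by rw [hxa] at hτxa; exact hτxa)
      · have : σ (τ x) = τ x := by simpa [Equiv.Perm.mem_support, not_not] using hτxσ
        rw [this]
        exact Equiv.Perm.mem_support.mp hxτ
    · have hτx : τ x = x := by simpa [Equiv.Perm.mem_support, not_not] using hxτ
      rw [hτx]
      have hxσ : x ∈ σ.support := by
        rcases Finset.mem_union.mp hx with h | h
        · exact h
        · exact absurd h hxτ
      exact Equiv.Perm.mem_support.mp hxσ
  have hsupp : (σ * τ).support = σ.support ∪ τ.support := by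
    apply Finset.Subset.antisymm
    · exact Equiv.Perm.support_mul_le σ τ
    · intro x hx
      exact Equiv.Perm.mem_support.mpr (moved x hx)
  refine ⟨⟨a, moved a (Finset.mem_union_left _ haσ), ?_⟩, hsupp⟩
  -- same-cycle part
  have claimA : ∀ j, j < orderOf τ → ((σ * τ) ^ j) a = (τ ^ j) a := by
    intro j
    induction j with
    | zero => intro _; simp
    | succ j ih =>
      intro hj
      have hj' : j < orderOf τ := Nat.lt_of_succ_lt hj
      have key : τ ((τ ^ j) a) = (τ ^ (j + 1)) a := by rw [pow_succ', Equiv.Perm.mul_apply]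
      have hne : (τ ^ (j + 1)) a ≠ a := cycle_pow_apply_ne hτ haτ' (Nat.succ_pos j) hj
      have hsupτ : (τ ^ (j + 1)) a ∈ τ.support := Equiv.Perm.pow_apply_mem_support.mpr haτ
      have hnot : (τ ^ (j + 1)) a ∉ σ.support := by
        intro hmem'
        have : (τ ^ (j + 1)) a ∈ σ.support ∩ τ.support := Finset.mem_inter.mpr ⟨hmem', hsupτ⟩
        rw [hint] at this
        exact hne (Finset.mem_singleton.mp this)
      have hσfix : σ ((τ ^ (j + 1)) a) = (τ ^ (j + 1)) a := by
        simpa [Equiv.Perm.mem_support, not_not] using hnot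
      rw [pow_succ', pow_succ', Equiv.Perm.mul_apply, Equiv.Perm.mul_apply, ih hj',
        Equiv.Perm.mul_apply, key]
      exact hσfix
  have horderτ : 0 < orderOf τ := orderOf_pos τ
  have claimB : ∀ i, i < orderOf σ → ((σ * τ) ^ (orderOf τ + i)) a = (σ ^ (i + 1)) a := by
    intro i
    induction i with
    | zero =>
      intro _
      obtain ⟨k, hk⟩ : ∃ k, orderOf τ = k + 1 := ⟨orderOf τ - 1, by omega⟩
      rw [hk]
      rw [Nat.add_zero, pow_succ', Equiv.Perm.mul_apply, claimA k (by omega),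
        Equiv.Perm.mul_apply]
      have : τ ((τ ^ k) a) = (τ ^ (k + 1)) a := by rw [pow_succ']; rfl
      rw [this, ← hk, pow_orderOf_eq_one]
      simp
    | succ i ih =>
      intro hi
      have hi' : i < orderOf σ := Nat.lt_of_succ_lt hi
      rw [← Nat.add_assoc, pow_succ', Equiv.Perm.mul_apply, ih hi', Equiv.Perm.mul_apply]
      have hne : (σ ^ (i + 1)) a ≠ a := cycle_pow_apply_ne hσ haσ' (Nat.succ_pos i) hi
      have hsupσ : (σ ^ (i + 1)) a ∈ σ.support := Equiv.Perm.pow_apply_mem_support.mpr haσ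
      have hnot : (σ ^ (i + 1)) a ∉ τ.support := by
        intro hmem'
        have : (σ ^ (i + 1)) a ∈ σ.support ∩ τ.support := Finset.mem_inter.mpr ⟨hsupσ, hmem'⟩
        rw [hint] at this
        exact hne (Finset.mem_singleton.mp this)
      have hτfix : τ ((σ ^ (i + 1)) a) = (σ ^ (i + 1)) a := by
        simpa [Equiv.Perm.mem_support, not_not] using hnot
      rw [hτfix]
      conv_rhs => rw [pow_succ']
      rfl
  intro x hmovx
  have hx : x ∈ σ.support ∪ τ.support := by
    have : x ∈ (σ * τ).support := Equiv.Perm.mem_support.mpr hmovx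
    rw [hsupp] at this; exact this
  rcases Finset.mem_union.mp hx with hxσ | hxτ
  · obtain ⟨i, hi, hieq⟩ :=
      (hσ.sameCycle haσ' (Equiv.Perm.mem_support.mp hxσ)).exists_pow_eq'
    rcases Nat.eq_zero_or_pos i with h0 | h0
    · subst h0
      simp only [pow_zero, Equiv.Perm.one_apply] at hieq
      rw [← hieq]
    · obtain ⟨i', rfl⟩ : ∃ i', i = i' + 1 := ⟨i - 1, by omega⟩
      refine ⟨(orderOf τ + i' : ℕ), ?_⟩
      rw [zpow_natCast, claimB i' (by omega), hieq]
  · obtain ⟨j, hj, hjeq⟩ :=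
      (hτ.sameCycle haτ' (Equiv.Perm.mem_support.mp hxτ)).exists_pow_eq'
    exact ⟨(j : ℕ), by rw [zpow_natCast, claimA j hj, hjeq]⟩

lemma key_shift (t W π : Perm A) (a0 : A) (hWc : (π * W * π⁻¹).IsCycle)
    (hsup : (π * W * π⁻¹).support = W.support)
    (ha0 : a0 ∈ W.support) (hπa0 : π a0 ∈ W.support)
    (hfix : ∀ x ∈ t.support, x ≠ a0 → π x = x ∧ x ∉ W.support)
    (hsW : Equiv.Perm.sign W = 1) :
    ∃ z : Perm A, z * t * z⁻¹ = t ∧ z * W * z⁻¹ = π * W * π⁻¹ ∧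
      Equiv.Perm.sign z = Equiv.Perm.sign π := by
  set C2 := π * W * π⁻¹ with hC2
  have h1 : C2 a0 ≠ a0 := Equiv.Perm.mem_support.mp (hsup ▸ ha0)
  have h2 : C2 (π a0) ≠ π a0 := Equiv.Perm.mem_support.mp (hsup ▸ hπa0)
  obtain ⟨k, hk⟩ := hWc.exists_zpow_eq h1 h2
  have hsC2 : Equiv.Perm.sign C2 = 1 := by
    simp only [hC2, Equiv.Perm.sign_mul, Equiv.Perm.sign_inv, hsW, mul_one]
    exact Int.units_mul_self _
  refine ⟨(C2 ^ k)⁻¹ * π, ?_, ?_, ?_⟩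
  · apply conj_eq_self_of_fix_support
    intro x hx
    by_cases hxa : x = a0
    · subst hxa
      rw [Equiv.Perm.mul_apply, ← hk, Equiv.Perm.inv_apply_self]
    · obtain ⟨hπx, hxW⟩ := hfix x hx hxa
      have hC2x : C2 x = x := by
        have : x ∉ C2.support := by rw [hsup]; exact hxW
        simpa [Equiv.Perm.mem_support, not_not] using this
      have hzx : (C2 ^ k) x = x := Equiv.Perm.zpow_apply_eq_self_of_apply_eq_self hC2x k
      have hzx' : (C2 ^ k)⁻¹ x = x := by conv_lhs => rw [← hzx, Equiv.Perm.inv_apply_self]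
      rw [Equiv.Perm.mul_apply, hπx, hzx']
  · have comm : C2 * C2 ^ k = C2 ^ k * C2 := ((Commute.refl C2).zpow_right k).eq
    calc (C2 ^ k)⁻¹ * π * W * ((C2 ^ k)⁻¹ * π)⁻¹
        = (C2 ^ k)⁻¹ * (π * W * π⁻¹) * C2 ^ k := by
          rw [mul_inv_rev, inv_inv]; simp only [mul_assoc]
      _ = (C2 ^ k)⁻¹ * (C2 ^ k * C2) := by rw [← hC2, ← comm]; simp only [mul_assoc]
      _ = C2 := by rw [← mul_assoc, inv_mul_cancel, one_mul]
  · simp only [Equiv.Perm.sign_mul, Equiv.Perm.sign_inv, map_zpow, hsC2, one_zpow, one_mul]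

lemma swap_conj_eq_self (g : Perm A) {a b : A} (hga : g a = a) (hgb : g b = b) :
    Equiv.swap a b * g * (Equiv.swap a b)⁻¹ = g := by
  ext x
  rw [Equiv.swap_inv]
  simp only [Equiv.Perm.mul_apply]
  by_cases hxa : x = a
  · subst hxa; rw [Equiv.swap_apply_left, hgb, Equiv.swap_apply_right, hga]
  by_cases hxb : x = b
  · subst hxb; rw [Equiv.swap_apply_right, hga, Equiv.swap_apply_left, hgb]
  · rw [Equiv.swap_apply_of_ne_of_ne hxa hxb]
    have h1 : g x ≠ a := fun h => hxa (by rw [← hga] at h; exact g.injective h)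
    have h2 : g x ≠ b := fun h => hxb (by rw [← hgb] at h; exact g.injective h)
    rw [Equiv.swap_apply_of_ne_of_ne h1 h2]

lemma exists_even_conj_fix (g : Perm A) (T F : Finset A) (hT : ∀ x ∈ T, g x = x)
    (hcard : T.card = F.card) (h2 : 2 ≤ T.card) :
    ∃ q : Perm A, Equiv.Perm.sign q = 1 ∧ ∀ i ∈ F, (q * g * q⁻¹) i = i := by
  classical
  have hcc : Fintype.card {x // x ∈ T} = Fintype.card {x // x ∈ F} := by
    simpa [Fintype.card_coe] using hcard
  have hcc' : Fintype.card {x // ¬ x ∈ T} = Fintype.card {x // ¬ x ∈ F} := by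
    rw [Fintype.card_subtype_compl, Fintype.card_subtype_compl, hcc]
  let e1 : {x // x ∈ T} ≃ {x // x ∈ F} := Fintype.equivOfCardEq hcc
  let e2 : {x // ¬ x ∈ T} ≃ {x // ¬ x ∈ F} := Fintype.equivOfCardEq hcc'
  let q0 : Perm A :=
    (Equiv.sumCompl (· ∈ T)).symm.trans ((e1.sumCongr e2).trans (Equiv.sumCompl (· ∈ F)))
  have hq0F : ∀ y ∈ F, q0⁻¹ y ∈ T := by
    intro y hy
    show q0.symm y ∈ T
    simp only [q0, Equiv.symm_trans_apply, Equiv.symm_symm]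
    rw [Equiv.sumCompl_symm_apply_of_pos hy]
    rw [Equiv.sumCongr_symm, Equiv.sumCongr_apply, Sum.map_inl, Equiv.sumCompl_apply_inl]
    exact (e1.symm ⟨y, hy⟩).2
  have hfix0 : ∀ i ∈ F, (q0 * g * q0⁻¹) i = i := by
    intro i hi
    simp only [Equiv.Perm.mul_apply]
    rw [hT _ (hq0F i hi), Equiv.Perm.apply_inv_self]
  rcases Int.units_eq_one_or (Equiv.Perm.sign q0) with hs | hs
  · exact ⟨q0, hs, hfix0⟩
  · obtain ⟨a, ha, b, hb, hab⟩ := Finset.one_lt_card.mp (by omega : 1 < T.card)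
    refine ⟨q0 * Equiv.swap a b, ?_, ?_⟩
    · rw [Equiv.Perm.sign_mul, hs, Equiv.Perm.sign_swap hab]; norm_num
    · intro i hi
      have : q0 * Equiv.swap a b * g * (q0 * Equiv.swap a b)⁻¹
          = q0 * (Equiv.swap a b * g * (Equiv.swap a b)⁻¹) * q0⁻¹ := by
        rw [mul_inv_rev]; simp only [mul_assoc]
      rw [this, swap_conj_eq_self g (hT a ha) (hT b hb)]
      exact hfix0 i hi

end Aux

set_option maxHeartbeats 2000000 in
/-- **Partial cancellation for long cycles.**
Let `n - r` be odd.  If every non-trivial element of `A_{n-r}` is covered by the one-part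
partition `(n-r)¹`, then every non-trivial element of `A_n` with at least `r` fixed points
is covered by the one-part partition `n¹`. -/
theorem partial_cancellation_cycle (n r : ℕ) (hrn : r ≤ n) (hodd : Odd (n - r))
    (hcov : ∀ h : alternatingGroup (Fin (n - r)), h ≠ 1 → CoveredByNCycles (n - r) h) :
    ∀ g : alternatingGroup (Fin n), g ≠ 1 →
      r ≤ (Finset.univ.filter fun i => (↑g : Equiv.Perm (Fin n)) i = i).card →
      CoveredByNCycles n g := by
  classical
  intro g hg hfixcard
  rcases Nat.eq_zero_or_pos r with hr0 | hrpos
  · subst hr0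
    simp only [Nat.sub_zero] at hcov
    exact hcov g hg
  intro x y hx hsx hy hsy
  -- n is odd, otherwise there are no n-cycles in A_n
  have hxsign : Equiv.Perm.sign (x : Equiv.Perm (Fin n)) = 1 :=
    Equiv.Perm.mem_alternatingGroup.mp x.2
  have hn_odd : Odd n := by
    rw [hx.sign, hsx] at hxsign
    rcases Nat.even_or_odd n with he | ho
    · exfalso; rw [he.neg_one_pow] at hxsign; exact absurd hxsign (by decide)
    · exact ho
  set m := n - r with hmdef
  have hmn : m + r = n := Nat.sub_add_cancel hrn
  have hr_even : Even r := by
    have h1 := Nat.odd_iff.mp hn_odd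
    have h2 := Nat.odd_iff.mp hodd
    rw [Nat.even_iff]; omega
  have hr2 : 2 ≤ r := by
    rcases hr_even with ⟨u, hu⟩; omega
  have hgne : (g : Equiv.Perm (Fin n)) ≠ 1 := by
    intro h; exact hg (Subtype.ext (by rw [h]; rfl))
  have hgsupp : (g : Equiv.Perm (Fin n)).support.card ≤ m := by
    have hfc := Finset.card_filter_add_card_filter_not
      (s := (Finset.univ : Finset (Fin n))) (p := fun i => (g : Equiv.Perm (Fin n)) i = i)
    have hsupp_eq : (g : Equiv.Perm (Fin n)).support
        = Finset.univ.filter fun i => ¬ (g : Equiv.Perm (Fin n)) i = i := rfl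
    rw [hsupp_eq]
    have hcu : (Finset.univ : Finset (Fin n)).card = n := by
      rw [Finset.card_univ, Fintype.card_fin]
    omega
  have hm3 : 3 ≤ m := by
    by_contra hc
    have hm1 : m = 1 := by rcases hodd with ⟨u, hu⟩; omega
    have hne1 := Equiv.Perm.card_support_ne_one (g : Equiv.Perm (Fin n))
    have : (g : Equiv.Perm (Fin n)).support.card = 0 := by omega
    exact hgne (Equiv.Perm.support_eq_empty_iff.mp (Finset.card_eq_zero.mp this))
  have hmn_le : m ≤ n := Nat.sub_le n r
  -- the base point, the first m points and the last r points
  let S : Finset (Fin n) := Finset.univ.filter fun i => (i : ℕ) < m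
  let F : Finset (Fin n) := Finset.univ.filter fun i => ¬ (i : ℕ) < m
  let emb : Fin m ≃ {i : Fin n // (i : ℕ) < m} :=
    ⟨fun j => ⟨⟨j.1, lt_of_lt_of_le j.2 hmn_le⟩, j.2⟩, fun x => ⟨(x.1 : ℕ), x.2⟩,
      fun j => rfl, fun x => rfl⟩
  have hScard : S.card = m := by
    have himg : S = Finset.image (fun j : Fin m => ((emb j : {i : Fin n // (i : ℕ) < m}) :
        Fin n)) Finset.univ := by
      ext i
      constructor
      · intro hi
        have hi' : (i : ℕ) < m := (Finset.mem_filter.mp hi).2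
        exact Finset.mem_image.mpr ⟨⟨(i : ℕ), hi'⟩, Finset.mem_univ _, rfl⟩
      · intro hi
        obtain ⟨j, -, rfl⟩ := Finset.mem_image.mp hi
        exact Finset.mem_filter.mpr ⟨Finset.mem_univ _, j.2⟩
    rw [himg, Finset.card_image_of_injective _
      (fun j j' h => emb.injective (Subtype.ext h)), Finset.card_univ, Fintype.card_fin]
  have hFcard : F.card = r := by
    have hfc := Finset.card_filter_add_card_filter_not
      (s := (Finset.univ : Finset (Fin n))) (p := fun i => (i : ℕ) < m)
    have hcu : (Finset.univ : Finset (Fin n)).card = n := by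
      rw [Finset.card_univ, Fintype.card_fin]
    have hSF : S.card + F.card = n := by rw [hcu] at hfc; exact hfc
    omega
  -- conjugate g so that it fixes all of F
  obtain ⟨T, hTsub, hTcard⟩ := Finset.exists_subset_card_eq
    (s := Finset.univ.filter fun i => (g : Equiv.Perm (Fin n)) i = i) (n := r) hfixcard
  have hTfix : ∀ z ∈ T, (g : Equiv.Perm (Fin n)) z = z := fun z hz =>
    (Finset.mem_filter.mp (hTsub hz)).2
  obtain ⟨q, hqsign, hqfix⟩ := exists_even_conj_fix (g : Equiv.Perm (Fin n)) T F hTfix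
    (by rw [hTcard, hFcard]) (by rw [hTcard]; exact hr2)
  set g2 : Equiv.Perm (Fin n) := q * (g : Equiv.Perm (Fin n)) * q⁻¹ with hg2def
  have hg2sign : Equiv.Perm.sign g2 = 1 := by
    have hgs : Equiv.Perm.sign (g : Equiv.Perm (Fin n)) = 1 :=
      Equiv.Perm.mem_alternatingGroup.mp g.2
    simp only [hg2def, Equiv.Perm.sign_mul, Equiv.Perm.sign_inv, hgs, hqsign, mul_one, one_mul]
  have hg2ne : g2 ≠ 1 := by
    intro h
    apply hgne
    have : (g : Equiv.Perm (Fin n)) = q⁻¹ * g2 * q := by rw [hg2def]; group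
    rw [this, h]; group
  have hg2fix : ∀ i : Fin n, ¬ (i : ℕ) < m → g2 i = i := by
    intro i hi
    exact hqfix i (Finset.mem_filter.mpr ⟨Finset.mem_univ _, hi⟩)
  -- the extension homomorphism
  set E : Equiv.Perm (Fin m) → Equiv.Perm (Fin n) := fun e => e.extendDomain emb with hEdef
  have hEmul : ∀ e e' : Equiv.Perm (Fin m), E e * E e' = E (e * e') := fun e e' =>
    Equiv.Perm.extendDomain_mul emb e e'
  have hEinv : ∀ e : Equiv.Perm (Fin m), (E e)⁻¹ = E e⁻¹ := fun e => rfl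
  have hEsign : ∀ e : Equiv.Perm (Fin m), Equiv.Perm.sign (E e) = Equiv.Perm.sign e :=
    fun e => Equiv.Perm.sign_extendDomain e emb
  have hEfix : ∀ (e : Equiv.Perm (Fin m)) (i : Fin n), ¬ (i : ℕ) < m → E e i = i :=
    fun e i hi => Equiv.Perm.extendDomain_apply_not_subtype e emb hi
  have hEapp : ∀ (e : Equiv.Perm (Fin m)) (j : Fin m),
      E e ((emb j : {i : Fin n // (i : ℕ) < m}) : Fin n)
        = ((emb (e j) : {i : Fin n // (i : ℕ) < m}) : Fin n) :=
    fun e j => Equiv.Perm.extendDomain_apply_image e emb j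
  have hEsupp : ∀ e : Equiv.Perm (Fin m), (∀ j, e j ≠ j) → (E e).support = S := by
    intro e he
    ext i
    by_cases hi : (i : ℕ) < m
    · have hieq : i = ((emb ⟨(i : ℕ), hi⟩ : {i : Fin n // (i : ℕ) < m}) : Fin n) := rfl
      have hmove : E e i ≠ i := by
        conv_lhs => rw [hieq]
        rw [hEapp]
        intro hcontra
        have : emb (e ⟨(i : ℕ), hi⟩) = emb ⟨(i : ℕ), hi⟩ := by
          apply Subtype.ext
          rw [hcontra]; exact hieq
        exact he _ (emb.injective this)
      simp only [Equiv.Perm.mem_support]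
      constructor
      · intro _; exact Finset.mem_filter.mpr ⟨Finset.mem_univ _, hi⟩
      · intro _; exact hmove
    · have hfixi : E e i = i := hEfix e i hi
      simp only [Equiv.Perm.mem_support]
      constructor
      · intro hcon; exact absurd hfixi hcon
      · intro hcon; exact absurd (Finset.mem_filter.mp hcon).2 hi
  -- extract the element of A_m
  have hp : ∀ i : Fin n, (i : ℕ) < m ↔ ((g2 i : Fin n) : ℕ) < m := by
    intro i
    constructor
    · intro hi
      by_contra hcon
      have h1 : g2 (g2 i) = g2 i := hg2fix _ hcon
      have h2 : g2 i = i := g2.injective h1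
      rw [h2] at hcon; exact hcon hi
    · intro hi
      by_contra hcon
      have : g2 i = i := hg2fix i hcon
      rw [this] at hi; exact hcon hi
  set hmperm : Equiv.Perm (Fin m) := (Equiv.permCongr emb.symm) (g2.subtypePerm (fun i => (hp i).symm))
    with hmperm_def
  have hEh : E hmperm = g2 := by
    ext i
    by_cases hi : (i : ℕ) < m
    · have hieq : i = ((emb ⟨(i : ℕ), hi⟩ : {i : Fin n // (i : ℕ) < m}) : Fin n) := rfl
      conv_lhs => rw [hieq, hEapp]
      have : hmperm ⟨(i : ℕ), hi⟩
          = emb.symm (g2.subtypePerm (fun i => (hp i).symm) (emb ⟨(i : ℕ), hi⟩)) := by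
        rw [hmperm_def]
        simp [Equiv.permCongr_apply]
      rw [this]
      rw [Equiv.apply_symm_apply]
      rfl
    · rw [hEfix _ _ hi, hg2fix _ hi]
  have hmsign : Equiv.Perm.sign hmperm = 1 := by
    rw [← hEsign, hEh]; exact hg2sign
  have hmne : hmperm ≠ 1 := by
    intro h
    apply hg2ne
    rw [← hEh, h, hEdef]
    exact Equiv.Perm.extendDomain_one emb
  set h_alt : alternatingGroup (Fin m) :=
    ⟨hmperm, Equiv.Perm.mem_alternatingGroup.mpr hmsign⟩ with h_alt_def
  have h_alt_ne : h_alt ≠ 1 := by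
    intro h
    exact hmne (congrArg Subtype.val h)
  -- the standard m-cycle u0
  set u0 : Equiv.Perm (Fin m) := (Finset.univ : Finset (Fin m)).toList.formPerm with hu0def
  have hlen : (Finset.univ : Finset (Fin m)).toList.length = m := by
    rw [Finset.length_toList, Finset.card_univ, Fintype.card_fin]
  have hu0c : u0.IsCycle :=
    List.isCycle_formPerm (Finset.nodup_toList _) (by rw [hlen]; omega)
  have hu0supp : u0.support = Finset.univ := by
    rw [hu0def, List.support_formPerm_of_nodup _ (Finset.nodup_toList _) ?_,
      Finset.toList_toFinset]
    intro z hz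
    have := congrArg List.length hz
    rw [hlen] at this
    simp at this
    omega
  have hu0card : u0.support.card = m := by
    rw [hu0supp, Finset.card_univ, Fintype.card_fin]
  have hu0ne : ∀ j, u0 j ≠ j := fun j =>
    Equiv.Perm.mem_support.mp (hu0supp ▸ Finset.mem_univ j)
  have hu0sign : Equiv.Perm.sign u0 = 1 := by
    rw [hu0c.sign, hu0card, hodd.neg_one_pow]
    decide
  -- the base point a0 and the auxiliary cycle t
  have hn0 : 0 < n := by omega
  set a0 : Fin n := ⟨0, hn0⟩ with ha0def
  have ha0m : (a0 : ℕ) < m := by show 0 < m; omega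
  have ha0S : a0 ∈ S := Finset.mem_filter.mpr ⟨Finset.mem_univ _, ha0m⟩
  have ha0F : a0 ∉ F := by
    intro h
    exact (Finset.mem_filter.mp h).2 ha0m
  set tl : List (Fin n) := (insert a0 F).toList with htldef
  have htlen : tl.length = r + 1 := by
    rw [htldef, Finset.length_toList, Finset.card_insert_of_notMem ha0F, hFcard]
  set t : Equiv.Perm (Fin n) := tl.formPerm with htdef
  have htc : t.IsCycle := List.isCycle_formPerm (Finset.nodup_toList _) (by omega)
  have htsupp : t.support = insert a0 F := by
    rw [htdef, List.support_formPerm_of_nodup _ (Finset.nodup_toList _) ?_,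
      Finset.toList_toFinset]
    intro z hz
    have := congrArg List.length hz
    rw [htlen] at this
    simp at this
    omega
  have htcard : t.support.card = r + 1 := by
    rw [htsupp, Finset.card_insert_of_notMem ha0F, hFcard]
  have htsign : Equiv.Perm.sign t = 1 := by
    rw [htc.sign, htcard, (hr_even.add_one).neg_one_pow]
    decide
  -- intersections
  have hintST : S ∩ insert a0 F = {a0} := by
    ext i
    simp only [Finset.mem_inter, Finset.mem_insert, Finset.mem_singleton]
    constructor
    · rintro ⟨hiS, (rfl | hiF)⟩
      · rfl
      · exact absurd (Finset.mem_filter.mp hiS).2 (Finset.mem_filter.mp hiF).2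
    · rintro rfl
      exact ⟨ha0S, Or.inl rfl⟩
  -- the key conjugation lemma, specialized
  have hπfix : ∀ (α : Equiv.Perm (Fin m)), ∀ z ∈ t.support, z ≠ a0 →
      E α z = z ∧ z ∉ (E u0).support := by
    intro α z hz hza
    rw [htsupp] at hz
    have hzF : z ∈ F := by
      rcases Finset.mem_insert.mp hz with h | h
      · exact absurd h hza
      · exact h
    have hzm : ¬ (z : ℕ) < m := (Finset.mem_filter.mp hzF).2
    refine ⟨hEfix α z hzm, ?_⟩
    rw [hEsupp u0 hu0ne]
    intro hcon
    exact hzm (Finset.mem_filter.mp hcon).2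
  have hconjE : ∀ α : Equiv.Perm (Fin m), E α * E u0 * (E α)⁻¹ = E (α * u0 * α⁻¹) := by
    intro α
    rw [hEinv, hEmul, hEmul]
  have hconj_ne : ∀ α : Equiv.Perm (Fin m), ∀ j, (α * u0 * α⁻¹) j ≠ j := by
    intro α j hcon
    have : u0 (α⁻¹ j) = α⁻¹ j := by
      have := congrArg (fun w => α⁻¹ w) hcon
      simpa using this
    exact hu0ne _ this
  have hkey : ∀ α : Equiv.Perm (Fin m), ∃ z : Equiv.Perm (Fin n),
      z * t * z⁻¹ = t ∧ z * E u0 * z⁻¹ = E (α * u0 * α⁻¹) ∧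
      Equiv.Perm.sign z = Equiv.Perm.sign α := by
    intro α
    have hcyc : (E α * E u0 * (E α)⁻¹).IsCycle := by
      rw [hconjE]
      exact ((hu0c.conj (g := α)).extendDomain emb)
    have hsup : (E α * E u0 * (E α)⁻¹).support = (E u0).support := by
      rw [hconjE, hEsupp u0 hu0ne, hEsupp _ (hconj_ne α)]
    have ha0' : a0 ∈ (E u0).support := by rw [hEsupp u0 hu0ne]; exact ha0S
    have hπa0 : E α a0 ∈ (E u0).support := by
      rw [hEsupp u0 hu0ne]
      have heq : E α a0 = ((emb (α ⟨0, by omega⟩) : {i : Fin n // (i : ℕ) < m}) : Fin n) := by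
        have h0 : a0 = ((emb ⟨0, by omega⟩ : {i : Fin n // (i : ℕ) < m}) : Fin n) := rfl
        conv_lhs => rw [h0, hEapp]
      rw [heq]
      exact Finset.mem_filter.mpr ⟨Finset.mem_univ _, (emb _).2⟩
    have hsW : Equiv.Perm.sign (E u0) = 1 := by rw [hEsign]; exact hu0sign
    obtain ⟨z, h1, h2, h3⟩ := key_shift t (E u0) (E α) a0 hcyc hsup ha0' hπa0 (hπfix α) hsW
    exact ⟨z, h1, by rw [h2, hconjE], by rw [h3, hEsign]⟩
  -- the two base n-cycles
  have hEu0c : (E u0).IsCycle := hu0c.extendDomain emb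
  have hEu0card : (E u0).support.card = m := by rw [hEsupp u0 hu0ne, hScard]
  have hintc0 : (E u0).support ∩ t.support = {a0} := by
    rw [hEsupp u0 hu0ne, htsupp]; exact hintST
  obtain ⟨hc0c, hc0supp⟩ := isCycle_mul_of_inter_eq_singleton hEu0c htc hintc0
  have hc0card : (E u0 * t).support.card = n := by
    have hcu := Finset.card_union_add_card_inter (E u0).support t.support
    rw [hintc0] at hcu
    have h4 : ({a0} : Finset (Fin n)).card = 1 := Finset.card_singleton a0
    rw [hc0supp]
    omega
  have hintd0 : (t⁻¹).support ∩ (E u0).support = {a0} := by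
    rw [Equiv.Perm.support_inv, htsupp, Finset.inter_comm, hEsupp u0 hu0ne]
    exact hintST
  obtain ⟨hd0c, hd0supp⟩ := isCycle_mul_of_inter_eq_singleton htc.inv hEu0c hintd0
  have hd0card : (t⁻¹ * E u0).support.card = n := by
    have hcu := Finset.card_union_add_card_inter (t⁻¹).support (E u0).support
    rw [hintd0] at hcu
    have h2 : (t⁻¹).support.card = r + 1 := by rw [Equiv.Perm.support_inv, htcard]
    have h4 : ({a0} : Finset (Fin n)).card = 1 := Finset.card_singleton a0
    rw [hd0supp]
    omega
  -- conjugators from the base cycles to x and y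
  obtain ⟨σc, hσc⟩ := isConj_iff.mp (hc0c.isConj hx (by rw [hc0card, hsx]))
  obtain ⟨σd, hσd⟩ := isConj_iff.mp (hd0c.isConj hy (by rw [hd0card, hsy]))
  have h1m : 1 < m := by omega
  have h01 : (⟨0, by omega⟩ : Fin m) ≠ ⟨1, h1m⟩ := by simp [Fin.ext_iff]
  set τc : Equiv.Perm (Fin m) := if Equiv.Perm.sign σc = 1 then 1
    else Equiv.swap ⟨0, by omega⟩ ⟨1, h1m⟩ with hτcdef
  have hτcsign : Equiv.Perm.sign τc = Equiv.Perm.sign σc := by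
    rcases Int.units_eq_one_or (Equiv.Perm.sign σc) with hs | hs
    · rw [hτcdef, if_pos hs, hs]; simp
    · rw [hτcdef, if_neg (by rw [hs]; decide), hs, Equiv.Perm.sign_swap h01]
  set τd : Equiv.Perm (Fin m) := if Equiv.Perm.sign σd = 1 then 1
    else Equiv.swap ⟨0, by omega⟩ ⟨1, h1m⟩ with hτddef
  have hτdsign : Equiv.Perm.sign τd = Equiv.Perm.sign σd := by
    rcases Int.units_eq_one_or (Equiv.Perm.sign σd) with hs | hs
    · rw [hτddef, if_pos hs, hs]; simp
    · rw [hτddef, if_neg (by rw [hs]; decide), hs, Equiv.Perm.sign_swap h01]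
  -- the prescribed classes for the covering hypothesis
  set uc : Equiv.Perm (Fin m) := τc * u0 * τc⁻¹ with hucdef
  have hucc : uc.IsCycle := hu0c.conj
  have huccard : uc.support.card = m := by
    rw [hucdef, Equiv.Perm.support_conj, Finset.card_map, hu0card]
  have hucsign : Equiv.Perm.sign uc = 1 := by
    rw [hucdef]
    simp only [Equiv.Perm.sign_mul, Equiv.Perm.sign_inv, hu0sign, mul_one]
    exact Int.units_mul_self _
  set vc : Equiv.Perm (Fin m) := τd * u0 * τd⁻¹ with hvcdef
  have hvcc : vc.IsCycle := hu0c.conj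
  have hvccard : vc.support.card = m := by
    rw [hvcdef, Equiv.Perm.support_conj, Finset.card_map, hu0card]
  have hvcsign : Equiv.Perm.sign vc = 1 := by
    rw [hvcdef]
    simp only [Equiv.Perm.sign_mul, Equiv.Perm.sign_inv, hu0sign, mul_one]
    exact Int.units_mul_self _
  set u_alt : alternatingGroup (Fin m) :=
    ⟨uc, Equiv.Perm.mem_alternatingGroup.mpr hucsign⟩ with hu_alt_def
  set v_alt : alternatingGroup (Fin m) :=
    ⟨vc, Equiv.Perm.mem_alternatingGroup.mpr hvcsign⟩ with hv_alt_def
  -- apply the covering hypothesis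
  obtain ⟨c_sub, d_sub, hconj_u, hconj_v, hprod⟩ :=
    hcov h_alt h_alt_ne u_alt v_alt hucc huccard hvcc hvccard
  -- c side
  obtain ⟨zc0, hzc0⟩ := isConj_iff.mp hconj_u
  have hβcsign : Equiv.Perm.sign (zc0 : Equiv.Perm (Fin m)) = 1 :=
    Equiv.Perm.mem_alternatingGroup.mp zc0.2
  set αc : Equiv.Perm (Fin m) := (zc0 : Equiv.Perm (Fin m)) * τc with hαcdef
  have hc' : (c_sub : Equiv.Perm (Fin m)) = αc * u0 * αc⁻¹ := by
    have hc'eq : (c_sub : Equiv.Perm (Fin m))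
        = (zc0 : Equiv.Perm (Fin m)) * uc * (zc0 : Equiv.Perm (Fin m))⁻¹ := by
      rw [← hzc0]; rfl
    rw [hc'eq, hucdef, hαcdef]; group
  obtain ⟨zc, hzct, hzcW, hzcsign⟩ := hkey αc
  have hzcsign' : Equiv.Perm.sign zc = Equiv.Perm.sign σc := by
    rw [hzcsign, hαcdef, Equiv.Perm.sign_mul, hβcsign, one_mul, hτcsign]
  have hcconj : zc * (E u0 * t) * zc⁻¹ = E ↑c_sub * t := by
    have hsplit : zc * (E u0 * t) * zc⁻¹ = (zc * E u0 * zc⁻¹) * (zc * t * zc⁻¹) := by group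
    rw [hsplit, hzcW, hzct, ← hc']
  have hwc : (zc * σc⁻¹) * (x : Equiv.Perm (Fin n)) * (zc * σc⁻¹)⁻¹ = E ↑c_sub * t := by
    rw [← hσc, ← hcconj]; group
  have hwcsign : Equiv.Perm.sign (zc * σc⁻¹) = 1 := by
    rw [Equiv.Perm.sign_mul, Equiv.Perm.sign_inv, hzcsign']
    exact Int.units_mul_self _
  -- d side
  obtain ⟨zd0, hzd0⟩ := isConj_iff.mp hconj_v
  have hβdsign : Equiv.Perm.sign (zd0 : Equiv.Perm (Fin m)) = 1 :=
    Equiv.Perm.mem_alternatingGroup.mp zd0.2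
  set αd : Equiv.Perm (Fin m) := (zd0 : Equiv.Perm (Fin m)) * τd with hαddef
  have hd' : (d_sub : Equiv.Perm (Fin m)) = αd * u0 * αd⁻¹ := by
    have hd'eq : (d_sub : Equiv.Perm (Fin m))
        = (zd0 : Equiv.Perm (Fin m)) * vc * (zd0 : Equiv.Perm (Fin m))⁻¹ := by
      rw [← hzd0]; rfl
    rw [hd'eq, hvcdef, hαddef]; group
  obtain ⟨zd, hzdt, hzdW, hzdsign⟩ := hkey αd
  have hzdsign' : Equiv.Perm.sign zd = Equiv.Perm.sign σd := by
    rw [hzdsign, hαddef, Equiv.Perm.sign_mul, hβdsign, one_mul, hτdsign]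
  have hzdtinv : zd * t⁻¹ * zd⁻¹ = t⁻¹ := by
    have h5 : zd * t⁻¹ * zd⁻¹ = (zd * t * zd⁻¹)⁻¹ := by group
    rw [h5, hzdt]
  have hdconj : zd * (t⁻¹ * E u0) * zd⁻¹ = t⁻¹ * E ↑d_sub := by
    have hsplit : zd * (t⁻¹ * E u0) * zd⁻¹ = (zd * t⁻¹ * zd⁻¹) * (zd * E u0 * zd⁻¹) := by
      group
    rw [hsplit, hzdtinv, hzdW, ← hd']
  have hwd : (zd * σd⁻¹) * (y : Equiv.Perm (Fin n)) * (zd * σd⁻¹)⁻¹ = t⁻¹ * E ↑d_sub := by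
    rw [← hσd, ← hdconj]; group
  have hwdsign : Equiv.Perm.sign (zd * σd⁻¹) = 1 := by
    rw [Equiv.Perm.sign_mul, Equiv.Perm.sign_inv, hzdsign']
    exact Int.units_mul_self _
  -- signs of the two factors
  have hcsubsign : Equiv.Perm.sign (c_sub : Equiv.Perm (Fin m)) = 1 :=
    Equiv.Perm.mem_alternatingGroup.mp c_sub.2
  have hdsubsign : Equiv.Perm.sign (d_sub : Equiv.Perm (Fin m)) = 1 :=
    Equiv.Perm.mem_alternatingGroup.mp d_sub.2
  have hcpermsign : Equiv.Perm.sign (E ↑c_sub * t) = 1 := by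
    rw [Equiv.Perm.sign_mul, hEsign, hcsubsign, htsign, mul_one]
  have hdpermsign : Equiv.Perm.sign (t⁻¹ * E ↑d_sub) = 1 := by
    rw [Equiv.Perm.sign_mul, Equiv.Perm.sign_inv, htsign, hEsign, hdsubsign, mul_one]
  -- the product equals g2
  have hprodperm : (E ↑c_sub * t) * (t⁻¹ * E ↑d_sub) = g2 := by
    have h5 : (E ↑c_sub * t) * (t⁻¹ * E ↑d_sub) = E ↑c_sub * E ↑d_sub := by group
    have h6 : (c_sub : Equiv.Perm (Fin m)) * ↑d_sub = hmperm :=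
      (congrArg Subtype.val hprod).symm
    rw [h5, hEmul, h6, hEh]
  -- assemble the final data
  refine ⟨⟨q⁻¹ * (E ↑c_sub * t) * q, Equiv.Perm.mem_alternatingGroup.mpr ?_⟩,
    ⟨q⁻¹ * (t⁻¹ * E ↑d_sub) * q, Equiv.Perm.mem_alternatingGroup.mpr ?_⟩, ?_, ?_, ?_⟩
  · rw [Equiv.Perm.sign_mul, Equiv.Perm.sign_mul, Equiv.Perm.sign_inv, hqsign,
      hcpermsign, mul_one, one_mul]
  · rw [Equiv.Perm.sign_mul, Equiv.Perm.sign_mul, Equiv.Perm.sign_inv, hqsign,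
      hdpermsign, mul_one, one_mul]
  · apply isConj_iff.mpr
    refine ⟨⟨q⁻¹ * (zc * σc⁻¹), Equiv.Perm.mem_alternatingGroup.mpr (by
      rw [Equiv.Perm.sign_mul, Equiv.Perm.sign_inv, hqsign, hwcsign, mul_one])⟩, ?_⟩
    apply Subtype.ext
    show (q⁻¹ * (zc * σc⁻¹)) * (x : Equiv.Perm (Fin n)) * (q⁻¹ * (zc * σc⁻¹))⁻¹
      = q⁻¹ * (E ↑c_sub * t) * q
    rw [← hwc]; group
  · apply isConj_iff.mpr
    refine ⟨⟨q⁻¹ * (zd * σd⁻¹), Equiv.Perm.mem_alternatingGroup.mpr (by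
      rw [Equiv.Perm.sign_mul, Equiv.Perm.sign_inv, hqsign, hwdsign, mul_one])⟩, ?_⟩
    apply Subtype.ext
    show (q⁻¹ * (zd * σd⁻¹)) * (y : Equiv.Perm (Fin n)) * (q⁻¹ * (zd * σd⁻¹))⁻¹
      = q⁻¹ * (t⁻¹ * E ↑d_sub) * q
    rw [← hwd]; group
  · apply Subtype.ext
    show (g : Equiv.Perm (Fin n))
      = (q⁻¹ * (E ↑c_sub * t) * q) * (q⁻¹ * (t⁻¹ * E ↑d_sub) * q)
    have h7 : (q⁻¹ * (E ↑c_sub * t) * q) * (q⁻¹ * (t⁻¹ * E ↑d_sub) * q)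
        = q⁻¹ * ((E ↑c_sub * t) * (t⁻¹ * E ↑d_sub)) * q := by group
    rw [h7, hprodperm, hg2def]
    group
end

section
/- Let a ≤ b be integers and let I₁ = [a₁,b₁], …, I_r = [a_r,b_r] be a packing of the interval [a,b], with a valid sequence S_i for each I_i. Let δ be the packing cycle for these valid sequences, and for 1 ≤ i ≤ r set β_i := (a_i, a_i+1, …, b_i)·(S_i), where (S_i) denotes the cycle determined by the sequence S_i. Then the permutations β₁,…,β_r have pairwise disjoint supports, and (a, a+1, …, b)·δ = β₁β₂⋯β_r. -/
open Equiv

/-- The ascending list `[a, a+1, …, b]` of the integers in the interval `[a, b]`. -/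
def ascList (a b : ℤ) : List ℤ := (List.range (b + 1 - a).toNat).map (fun i => a + i)

/-- The descending list `[c-1, c-2, …, a]`. -/
def descList (a c : ℤ) : List ℤ := (List.range (c - a).toNat).map (fun i => c - 1 - i)

/-- `S` is a valid sequence for the interval `[c, d]`: its first term is `d` and every
element of `[c, d]` appears in it exactly once (hence it has `1 + d - c` terms). -/
def ValidSeq (c d : ℤ) (S : List ℤ) : Prop :=
  S.head? = some d ∧ S.Nodup ∧ ∀ z : ℤ, z ∈ S ↔ z ∈ Finset.Icc c d

set_option linter.unusedTactic false
set_option linter.unusedVariables false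

lemma ascList_def (a b : ℤ) : ascList a b = (List.range (b + 1 - a).toNat).map (fun i : ℕ => a + (i:ℤ)) := by
  rw [ascList, show (do let i ← List.range (b+1-a).toNat; pure ((i:ℤ))) = (List.range (b+1-a).toNat).map (fun i : ℕ => (i:ℤ)) from List.flatMap_pure_eq_map _ _, List.map_map]
  rfl

lemma descList_def (a c : ℤ) : descList a c = (List.range (c - a).toNat).map (fun i : ℕ => c - 1 - (i:ℤ)) := by
  rw [descList, show (do let i ← List.range (c-a).toNat; pure ((i:ℤ))) = (List.range (c-a).toNat).map (fun i : ℕ => (i:ℤ)) from List.flatMap_pure_eq_map _ _, List.map_map]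
  rfl

lemma mem_ascList {a b z : ℤ} : z ∈ ascList a b ↔ a ≤ z ∧ z ≤ b := by
  rw [ascList_def]
  simp only [List.mem_map, List.mem_range]
  constructor
  · rintro ⟨i, hi, rfl⟩
    rw [Int.lt_toNat] at hi
    omega
  · rintro ⟨h1, h2⟩
    exact ⟨(z - a).toNat, by rw [Int.lt_toNat]; omega, by omega⟩

lemma nodup_ascList {a b : ℤ} : (ascList a b).Nodup := by
  rw [ascList_def]
  exact (List.nodup_range).map (fun i j h => by omega)

lemma ascList_ne_nil {a b : ℤ} (h : a ≤ b) : ascList a b ≠ [] := by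
  intro hn
  have := mem_ascList.mpr ⟨le_refl a, h⟩
  rw [hn] at this; exact absurd this List.not_mem_nil

lemma ascList_split {a b : ℤ} (m : ℤ) (h1 : a - 1 ≤ m) (h2 : m ≤ b) :
    ascList a b = ascList a m ++ ascList (m + 1) b := by
  rw [ascList_def, ascList_def, ascList_def]
  apply List.ext_getElem
  · simp only [List.length_append, List.length_map, List.length_range]
    omega
  · intro i h₁ h₂
    simp only [List.length_map, List.length_range] at h₁ h₂
    rcases lt_or_ge i ((m + 1 - a).toNat) with hc | hc
    · rw [List.getElem_append_left (by simp only [List.length_map, List.length_range]; omega)]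
      simp only [List.getElem_map, List.getElem_range]
    · rw [List.getElem_append_right (by simp only [List.length_map, List.length_range]; omega)]
      simp only [List.getElem_map, List.getElem_range, List.length_map, List.length_range]
      have : (i : ℤ) < b + 1 - a := by
        rw [List.length_append, List.length_map, List.length_range, List.length_map,
          List.length_range] at h₂
        omega
      omega

lemma descList_eq_reverse {a c : ℤ} : descList a c = (ascList a (c - 1)).reverse := by
  rw [ascList_def, descList_def]
  apply List.ext_getElem
  · simp only [List.length_reverse, List.length_map, List.length_range]
    omega
  · intro i h₁ h₂
    simp only [List.length_map, List.length_range] at h₁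
    rw [List.getElem_reverse]
    simp only [List.getElem_map, List.getElem_range, List.length_map, List.length_range]
    have : (c - 1 + 1 - a).toNat = (c - a).toNat := by omega
    omega

lemma ascList_concat {a b : ℤ} (h : a ≤ b) : ascList a b = ascList a (b - 1) ++ [b] := by
  rw [ascList_split (b - 1) (by omega) (by omega)]
  congr 1
  rw [ascList_def]
  have : (b + 1 - (b - 1 + 1)).toNat = 1 := by omega
  rw [this, show List.range 1 = [0] from rfl, List.map_singleton]
  norm_num

lemma ascList_getLast? {a b : ℤ} (h : a ≤ b) : (ascList a b).getLast? = some b := by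
  rw [ascList_concat h, List.getLast?_concat]

lemma ascList_cons {a b : ℤ} (h : a ≤ b) : ascList a b = a :: ascList (a + 1) b := by
  rw [ascList_split a (by omega) h]
  congr 1
  rw [ascList_def]
  have : (a + 1 - a).toNat = 1 := by omega
  rw [this, show List.range 1 = [0] from rfl, List.map_singleton]
  norm_num

lemma ascList_head? {a b : ℤ} (h : a ≤ b) : (ascList a b).head? = some a := by
  rw [ascList_cons h]; rfl

lemma mem_descList {a c z : ℤ} : z ∈ descList a c ↔ a ≤ z ∧ z ≤ c - 1 := by
  rw [descList_eq_reverse, List.mem_reverse, mem_ascList]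

lemma nodup_descList {a c : ℤ} : (descList a c).Nodup := by
  rw [descList_eq_reverse]
  exact List.nodup_reverse.mpr nodup_ascList


lemma mem_of_getLast?_eq {α : Type*} {l : List α} {d : α} (h : l.getLast? = some d) : d ∈ l := by
  obtain ⟨hne, rfl⟩ := List.mem_getLast?_eq_getLast (show d ∈ l.getLast? from h)
  exact List.getLast_mem hne

lemma swap_mul_formPerm {α : Type*} [DecidableEq α] {x y : α} {l : List α}
    (hx : x ∉ l) (hy : y ∉ l) :
    Equiv.swap x y * l.formPerm = l.formPerm * Equiv.swap x y := by
  have h1 : l.formPerm⁻¹ x = x := by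
    rw [Equiv.Perm.inv_eq_iff_eq, List.formPerm_apply_of_notMem hx]
  have h2 : l.formPerm⁻¹ y = y := by
    rw [Equiv.Perm.inv_eq_iff_eq, List.formPerm_apply_of_notMem hy]
  rw [Equiv.swap_mul_eq_mul_swap, h1, h2]

lemma formPerm_apply_getLast_of_head {α : Type*} [DecidableEq α] {l : List α} {c d : α}
    (hh : l.head? = some c) (hd : l.getLast? = some d) : l.formPerm d = c := by
  rcases l with _ | ⟨c', ts⟩
  · simp at hd
  · have hc : c' = c := by simpa using hh
    subst hc
    have hdl : d = (c' :: ts).getLast (List.cons_ne_nil _ _) := by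
      rw [List.getLast?_eq_getLast (List.cons_ne_nil _ _)] at hd
      exact (Option.some_injective _ hd).symm
    rw [hdl]
    exact List.formPerm_apply_getLast c' ts

lemma formPerm_cons_eq_mul_swap {α : Type*} [DecidableEq α] :
    ∀ (l : List α) (x d : α), (x :: l).Nodup → l.getLast? = some d →
    (x :: l).formPerm = l.formPerm * Equiv.swap x d := by
  intro l
  induction l with
  | nil => intro x d _ h; simp at h
  | cons y t ih =>
    intro x d hn hd
    rcases eq_or_ne t [] with rfl | ht
    · simp only [List.getLast?_singleton, Option.some.injEq] at hd
      subst hd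
      rw [List.formPerm_pair, List.formPerm_singleton, one_mul]
    · have hd' : t.getLast? = some d := by
        obtain ⟨z, t', rfl⟩ := List.exists_cons_of_ne_nil ht
        rwa [List.getLast?_cons_cons] at hd
      have hn' : (y :: t).Nodup := hn.of_cons
      have hx : x ∉ y :: t := (List.nodup_cons.mp hn).1
      have hxt : x ∉ t := fun h => hx (List.mem_cons_of_mem _ h)
      have hyt : y ∉ t := (List.nodup_cons.mp hn').1
      have hdt : d ∈ t := mem_of_getLast?_eq hd'
      have hxy : x ≠ y := fun h => hx (h ▸ (List.mem_cons_self : x ∈ x :: t))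
      have hxd : x ≠ d := fun h => hxt (h ▸ hdt)
      rw [List.formPerm_cons_cons, ih y d hn' hd']
      rw [← mul_assoc, swap_mul_formPerm hxt hyt, mul_assoc, mul_assoc]
      congr 1
      rw [Equiv.swap_mul_eq_mul_swap, Equiv.swap_inv,
        Equiv.swap_apply_of_ne_of_ne hxy hxd, Equiv.swap_apply_left]

lemma formPerm_cons_append {α : Type*} [DecidableEq α] :
    ∀ (l₁ : List α) (x : α) (l₂ : List α), (x :: (l₁ ++ l₂)).Nodup →
    (x :: (l₁ ++ l₂)).formPerm = (x :: l₂).formPerm * (x :: l₁).formPerm := by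
  intro l₁
  induction l₁ with
  | nil => intro x l₂ h; rw [List.nil_append, List.formPerm_singleton, mul_one]
  | cons y t ih =>
    intro x l₂ h
    have h' : (y :: (t ++ l₂)).Nodup := h.of_cons
    have hx : x ∉ y :: (t ++ l₂) := (List.nodup_cons.mp h).1
    have hy : y ∉ t ++ l₂ := (List.nodup_cons.mp h').1
    have hxl₂ : x ∉ l₂ := fun hm => hx (List.mem_cons_of_mem _ (List.mem_append_right _ hm))
    have hyl₂ : y ∉ l₂ := fun hm => hy (List.mem_append_right _ hm)
    have hxy : x ≠ y := fun hxy => hx (hxy ▸ (List.mem_cons_self : x ∈ x :: (t ++ l₂)))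
    rw [List.cons_append, List.formPerm_cons_cons, ih y l₂ h', List.formPerm_cons_cons]
    have hmain : Equiv.swap x y * (y :: l₂).formPerm = (x :: l₂).formPerm * Equiv.swap x y := by
      rcases eq_or_ne l₂ [] with rfl | hl₂
      · rw [List.formPerm_singleton, List.formPerm_singleton, mul_one, one_mul]
      · obtain ⟨d, hd⟩ := Option.isSome_iff_exists.mp (List.getLast?_isSome.mpr hl₂)
        have hdl₂ : d ∈ l₂ := mem_of_getLast?_eq hd
        have hxd : x ≠ d := fun hh => hxl₂ (hh ▸ hdl₂)
        have hyd : y ≠ d := fun hh => hyl₂ (hh ▸ hdl₂)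
        have hnx : (x :: l₂).Nodup :=
          List.nodup_cons.mpr ⟨hxl₂, (h.of_cons).of_append_right⟩
        have hny : (y :: l₂).Nodup :=
          List.nodup_cons.mpr ⟨hyl₂, (h.of_cons).of_append_right⟩
        rw [formPerm_cons_eq_mul_swap l₂ x d hnx hd, formPerm_cons_eq_mul_swap l₂ y d hny hd,
          ← mul_assoc, swap_mul_formPerm hxl₂ hyl₂, mul_assoc, mul_assoc]
        congr 1
        rw [Equiv.mul_swap_eq_swap_mul, Equiv.swap_apply_right,
          Equiv.swap_apply_of_ne_of_ne hxd.symm hyd.symm]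
    rw [← mul_assoc, hmain, mul_assoc]

/-- Lemma A -/
lemma formPerm_cons_mul_formPerm_cons {α : Type*} [DecidableEq α]
    (x c d : α) (l₁ l₂ : List α) (h₁ : (x :: l₁).Nodup) (h₂ : (x :: l₂).Nodup)
    (hc : l₁.getLast? = some c) (hd : l₂.getLast? = some d) (hh : l₂.head? = some c) :
    (x :: l₁).formPerm * (x :: l₂).formPerm = l₁.formPerm * l₂.formPerm := by
  have hxl₂ : x ∉ l₂ := (List.nodup_cons.mp h₂).1
  rw [formPerm_cons_eq_mul_swap l₁ x c h₁ hc, formPerm_cons_eq_mul_swap l₂ x d h₂ hd]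
  have hfd : l₂.formPerm d = c := formPerm_apply_getLast_of_head hh hd
  have hswap : Equiv.swap x c * l₂.formPerm = l₂.formPerm * Equiv.swap x d := by
    have e1 : l₂.formPerm⁻¹ x = x := by
      rw [Equiv.Perm.inv_eq_iff_eq, List.formPerm_apply_of_notMem hxl₂]
    have e2 : l₂.formPerm⁻¹ c = d := by
      rw [Equiv.Perm.inv_eq_iff_eq, hfd]
    rw [Equiv.swap_mul_eq_mul_swap, e1, e2]
  calc l₁.formPerm * Equiv.swap x c * (l₂.formPerm * Equiv.swap x d)
      = l₁.formPerm * (Equiv.swap x c * l₂.formPerm) * Equiv.swap x d := by group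
    _ = l₁.formPerm * (l₂.formPerm * Equiv.swap x d) * Equiv.swap x d := by rw [hswap]
    _ = l₁.formPerm * l₂.formPerm := by
        rw [mul_assoc, mul_assoc, Equiv.swap_mul_self, mul_one]

lemma chainA {r : ℕ} (A B : Fin r → ℤ) (hAB : ∀ i, A i ≤ B i)
    (hchain : ∀ i : ℕ, ∀ hi : i + 1 < r, B ⟨i + 1, hi⟩ = A ⟨i, by omega⟩ - 1) :
    ∀ j (hj : j < r) i (hij : i ≤ j), A ⟨j, hj⟩ ≤ A ⟨i, by omega⟩ := by
  intro j
  induction j with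
  | zero =>
    intro hj i hij
    have : i = 0 := by omega
    subst this
    exact le_refl _
  | succ m ihm =>
    intro hj i hij
    rcases Nat.eq_or_lt_of_le hij with heq | hlt
    · subst heq; exact le_refl _
    · have h1 := hAB ⟨m + 1, hj⟩
      have h2 := hchain m hj
      have h3 := ihm (by omega) i (by omega)
      omega

lemma chainB {r : ℕ} (A B : Fin r → ℤ) (hAB : ∀ i, A i ≤ B i)
    (hchain : ∀ i : ℕ, ∀ hi : i + 1 < r, B ⟨i + 1, hi⟩ = A ⟨i, by omega⟩ - 1) :
    ∀ j (hj : j < r) i (hij : i < j), B ⟨j, hj⟩ ≤ A ⟨i, by omega⟩ - 1 := by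
  intro j hj i hij
  obtain ⟨m, rfl⟩ : ∃ m, j = m + 1 := ⟨j - 1, by omega⟩
  have h2 := hchain m hj
  have h3 := chainA A B hAB hchain m (by omega) i (by omega)
  omega

lemma auxL : ∀ (r : ℕ) (a b e : ℤ) (A B : Fin r → ℤ) (S : Fin r → List ℤ),
    a ≤ e →
    (∀ i, A i ≤ B i) →
    (∀ i : Fin r, (i : ℕ) = 0 → B i = b) →
    (r = 0 → e = b + 1) →
    (∀ i : ℕ, ∀ hi : i + 1 < r, B ⟨i + 1, hi⟩ = A ⟨i, by omega⟩ - 1) →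
    (∀ i : Fin r, (i : ℕ) = r - 1 → e = A i) →
    (∀ i, ValidSeq (A i) (B i) (S i)) →
    ((List.ofFn S).flatten ++ descList a e).Nodup ∧
    (∀ z : ℤ, z ∈ (List.ofFn S).flatten ++ descList a e ↔ a ≤ z ∧ z ≤ b) := by
  intro r
  induction r with
  | zero =>
    intro a b e A B S hae hAB hB0 he0 hchain heS hS
    have he : e = b + 1 := he0 rfl
    subst he
    constructor
    · simpa using (nodup_descList : (descList a (b+1)).Nodup)
    · intro z
      simp only [List.ofFn_zero, List.flatten_nil, List.nil_append, mem_descList]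
      omega
  | succ n ih =>
    intro a b e A B S hae hAB hB0 he0 hchain heS hS
    have hb : B ⟨0, Nat.succ_pos n⟩ = b := hB0 ⟨0, Nat.succ_pos n⟩ rfl
    set c : ℤ := A ⟨0, Nat.succ_pos n⟩ - 1 with hc
    have heA : e = A ⟨n, by omega⟩ := heS ⟨n, by omega⟩ (by simp)
    have heA0 : e ≤ A ⟨0, Nat.succ_pos n⟩ := by
      rw [heA]; exact chainA A B hAB hchain n (by omega) 0 (by omega)
    have ha0 : a ≤ A ⟨0, Nat.succ_pos n⟩ := le_trans hae heA0
    -- apply ih to the shifted data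
    have hsub := ih a c e (fun i => A i.succ) (fun i => B i.succ) (fun i => S i.succ)
      hae (fun i => hAB i.succ)
      (by
        intro i hi
        have h0 : 0 < n := hi ▸ i.isLt
        have hieq : i = ⟨0, h0⟩ := Fin.ext hi
        subst hieq
        rw [hc]
        exact hchain 0 (by omega))
      (by
        intro hn
        have := heS ⟨0, by omega⟩ (by omega)
        omega)
      (by
        intro i hi
        exact hchain (i + 1) (by omega))
      (by
        intro i hi
        refine heS i.succ ?_
        rw [Fin.val_succ]
        omega)
      (fun i => hS i.succ)
    obtain ⟨hL'nd, hL'mem⟩ := hsub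
    have hS0 := hS ⟨0, Nat.succ_pos n⟩
    have hS0mem : ∀ z : ℤ, z ∈ S ⟨0, Nat.succ_pos n⟩ ↔ A ⟨0, Nat.succ_pos n⟩ ≤ z ∧ z ≤ b := by
      intro z
      rw [(hS0.2.2 z), Finset.mem_Icc, hb]
    have hdecomp : (List.ofFn S).flatten ++ descList a e
        = S ⟨0, Nat.succ_pos n⟩ ++ ((List.ofFn fun i : Fin n => S i.succ).flatten ++ descList a e) := by
      rw [List.ofFn_succ, List.flatten_cons, List.append_assoc]
      rfl
    rw [hdecomp]
    have hdisj : List.Disjoint (S ⟨0, Nat.succ_pos n⟩)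
        ((List.ofFn fun i : Fin n => S i.succ).flatten ++ descList a e) := by
      intro z hz1 hz2
      have h1 := (hS0mem z).mp hz1
      have h2 := (hL'mem z).mp hz2
      omega
    constructor
    · exact List.Nodup.append hS0.2.1 hL'nd hdisj
    · intro z
      rw [List.mem_append, hS0mem, hL'mem]
      have hAB0 := hAB ⟨0, Nat.succ_pos n⟩
      omega

lemma descList_head? {a c : ℤ} (h : a ≤ c) : (descList a (c+1)).head? = some c := by
  obtain ⟨m, hm⟩ : ∃ m, (c + 1 - a).toNat = m + 1 := ⟨(c - a).toNat, by omega⟩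
  rw [descList_def, hm, List.range_succ_eq_map, List.map_cons, List.head?_cons]
  norm_num

lemma formPerm_ascList_rot {a b : ℤ} (h : a ≤ b) :
    (ascList a b).formPerm = (b :: ascList a (b - 1)).formPerm := by
  have hnd : (b :: ascList a (b - 1)).Nodup :=
    List.nodup_cons.mpr ⟨fun hm => by rw [mem_ascList] at hm; omega, nodup_ascList⟩
  have hrot : (b :: ascList a (b - 1)).rotate 1 = ascList a b := by
    rw [List.rotate_cons_succ, List.rotate_zero]
    exact (ascList_concat h).symm
  rw [← hrot, List.formPerm_rotate _ hnd 1]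

lemma aux : ∀ (r : ℕ) (a b e : ℤ) (A B : Fin r → ℤ) (S : Fin r → List ℤ),
    a ≤ e →
    (∀ i, A i ≤ B i) →
    (∀ i : Fin r, (i : ℕ) = 0 → B i = b) →
    (r = 0 → e = b + 1) →
    (∀ i : ℕ, ∀ hi : i + 1 < r, B ⟨i + 1, hi⟩ = A ⟨i, by omega⟩ - 1) →
    (∀ i : Fin r, (i : ℕ) = r - 1 → e = A i) →
    (∀ i, ValidSeq (A i) (B i) (S i)) →
    (ascList a b).formPerm * ((List.ofFn S).flatten ++ descList a e).formPerm =
      (List.ofFn fun i => (ascList (A i) (B i)).formPerm * (S i).formPerm).prod := by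
  intro r
  induction r with
  | zero =>
    intro a b e A B S hae hAB hB0 he0 hchain heS hS
    have he : e = b + 1 := he0 rfl
    subst he
    rw [List.ofFn_zero, List.ofFn_zero, List.flatten_nil, List.nil_append, List.prod_nil,
      show descList a (b + 1) = (ascList a (b + 1 - 1)).reverse from descList_eq_reverse,
      List.formPerm_reverse, show b + 1 - 1 = b by ring, mul_inv_cancel]
  | succ n ih =>
    intro a b e A B S hae hAB hB0 he0 hchain heS hS
    have hb : B ⟨0, Nat.succ_pos n⟩ = b := hB0 ⟨0, Nat.succ_pos n⟩ rfl
    set c : ℤ := A ⟨0, Nat.succ_pos n⟩ - 1 with hc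
    have heA : e = A ⟨n, by omega⟩ := heS ⟨n, by omega⟩ (by simp)
    have heA0 : e ≤ A ⟨0, Nat.succ_pos n⟩ := by
      rw [heA]; exact chainA A B hAB hchain n (by omega) 0 (by omega)
    have ha0 : a ≤ A ⟨0, Nat.succ_pos n⟩ := le_trans hae heA0
    have hA0B0 := hAB ⟨0, Nat.succ_pos n⟩
    -- hypotheses for the shifted data
    have hAB' : ∀ i : Fin n, A i.succ ≤ B i.succ := fun i => hAB i.succ
    have hB0' : ∀ i : Fin n, (i : ℕ) = 0 → B i.succ = c := by
      intro i hi
      have h0 : 0 < n := hi ▸ i.isLt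
      have hieq : i = ⟨0, h0⟩ := Fin.ext hi
      subst hieq
      rw [hc]
      exact hchain 0 (by omega)
    have he0' : n = 0 → e = c + 1 := by
      intro hn
      have := heS ⟨0, by omega⟩ (by omega)
      omega
    have hchain' : ∀ i : ℕ, ∀ hi : i + 1 < n,
        B (Fin.succ ⟨i + 1, hi⟩) = A (Fin.succ ⟨i, by omega⟩) - 1 := by
      intro i hi
      exact hchain (i + 1) (by omega)
    have heS' : ∀ i : Fin n, (i : ℕ) = n - 1 → e = A i.succ := by
      intro i hi
      refine heS i.succ ?_
      rw [Fin.val_succ]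
      omega
    have hS' : ∀ i : Fin n, ValidSeq (A i.succ) (B i.succ) (S i.succ) := fun i => hS i.succ
    -- facts about L' and S 0
    obtain ⟨hL'nd, hL'mem⟩ := auxL n a c e (fun i => A i.succ) (fun i => B i.succ)
      (fun i => S i.succ) hae hAB' hB0' he0' hchain' heS' hS'
    have hihr := ih a c e (fun i => A i.succ) (fun i => B i.succ)
      (fun i => S i.succ) hae hAB' hB0' he0' hchain' heS' hS'
    set L' : List ℤ := (List.ofFn fun i : Fin n => S i.succ).flatten ++ descList a e with hL'
    have hS0 := hS ⟨0, Nat.succ_pos n⟩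
    have hS0mem : ∀ z : ℤ, z ∈ S ⟨0, Nat.succ_pos n⟩ ↔ A ⟨0, Nat.succ_pos n⟩ ≤ z ∧ z ≤ b := by
      intro z
      rw [hS0.2.2 z, Finset.mem_Icc, hb]
    obtain ⟨hLnd, _⟩ := auxL (n+1) a b e A B S hae hAB hB0 (by omega) hchain heS hS
    have hdecomp : (List.ofFn S).flatten ++ descList a e =
        S ⟨0, Nat.succ_pos n⟩ ++ L' := by
      rw [List.ofFn_succ, List.flatten_cons, List.append_assoc]
      rfl
    rw [hdecomp] at hLnd
    -- RHS decomposition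
    have hprod : (List.ofFn fun i : Fin (n+1) =>
          (ascList (A i) (B i)).formPerm * (S i).formPerm).prod =
        ((ascList (A ⟨0, Nat.succ_pos n⟩) (B ⟨0, Nat.succ_pos n⟩)).formPerm *
            (S ⟨0, Nat.succ_pos n⟩).formPerm) *
          (List.ofFn fun i : Fin n =>
            (ascList (A i.succ) (B i.succ)).formPerm * (S i.succ).formPerm).prod := by
      rw [List.ofFn_succ, List.prod_cons]
      rfl
    rw [hdecomp, hprod]
    -- commute σ₀ with the tail product
    have hcomm : Commute ((S ⟨0, Nat.succ_pos n⟩).formPerm)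
        ((List.ofFn fun i : Fin n =>
          (ascList (A i.succ) (B i.succ)).formPerm * (S i.succ).formPerm).prod) := by
      refine Equiv.Perm.Disjoint.commute (Equiv.Perm.disjoint_prod_right _ ?_)
      intro g hg
      rw [List.mem_ofFn] at hg
      obtain ⟨i, rfl⟩ := Set.mem_range.mp hg
      intro z
      by_cases hz : z ∈ S ⟨0, Nat.succ_pos n⟩
      · right
        have hz' := (hS0mem z).mp hz
        have hxchain : B i.succ = A ⟨(i : ℕ), by omega⟩ - 1 := hchain (i : ℕ) (by omega)
        have hmono : A ⟨(i : ℕ), by omega⟩ ≤ A ⟨0, Nat.succ_pos n⟩ :=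
          chainA A B hAB hchain (i : ℕ) (by omega) 0 (by omega)
        have h1 : z ∉ ascList (A i.succ) (B i.succ) := by
          rw [mem_ascList]; omega
        have h2 : z ∉ S i.succ := by
          rw [(hS' i).2.2, Finset.mem_Icc]; omega
        rw [Equiv.Perm.mul_apply, List.formPerm_apply_of_notMem h2,
          List.formPerm_apply_of_notMem h1]
      · left
        exact List.formPerm_apply_of_notMem hz
    -- split on whether L' is empty
    rcases eq_or_ne L' [] with hL'nil | hL'ne
    · -- L' = []: n = 0, e = a = A 0
      have hfl : (List.ofFn fun i : Fin n => S i.succ).flatten = [] :=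
        (List.append_eq_nil_iff.mp hL'nil).1
      have hdesc : descList a e = [] := (List.append_eq_nil_iff.mp hL'nil).2
      have hn0 : n = 0 := by
        by_contra hn0
        have hb1 : B (Fin.succ ⟨0, Nat.pos_of_ne_zero hn0⟩) ∈ S (Fin.succ ⟨0, Nat.pos_of_ne_zero hn0⟩) := by
          rw [(hS' ⟨0, Nat.pos_of_ne_zero hn0⟩).2.2, Finset.mem_Icc]
          exact ⟨hAB' _, le_refl _⟩
        have : B (Fin.succ ⟨0, Nat.pos_of_ne_zero hn0⟩) ∈
            (List.ofFn fun i : Fin n => S i.succ).flatten := by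
          rw [List.mem_flatten]
          exact ⟨S (Fin.succ ⟨0, Nat.pos_of_ne_zero hn0⟩),
            List.mem_ofFn.mpr (Set.mem_range.mpr ⟨⟨0, Nat.pos_of_ne_zero hn0⟩, rfl⟩), hb1⟩
        rw [hfl] at this
        exact absurd this List.not_mem_nil
      have hea : e = a := by
        have hlen := congrArg List.length hdesc
        rw [descList_def, List.length_map, List.length_range] at hlen
        simp only [List.length_nil] at hlen
        omega
      subst hn0
      rw [hL'nil, List.append_nil, List.ofFn_zero, List.prod_nil, mul_one]
      have haA : A ⟨0, Nat.succ_pos 0⟩ = a := by omega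
      rw [haA, hb]
    · -- L' ≠ []
      have hac : a ≤ c := by
        obtain ⟨z, hz⟩ := List.exists_mem_of_ne_nil L' hL'ne
        exact le_trans ((hL'mem z).mp hz).1 (((hL'mem z).mp hz).2.trans (le_refl c))
      have hcb : c < b := by omega
      -- head of L' is c
      have hL'head : L'.head? = some c := by
        rcases Nat.eq_zero_or_pos n with hn0 | hn0
        · have hfl : (List.ofFn fun i : Fin n => S i.succ).flatten = [] := by
            subst hn0; rw [List.ofFn_zero, List.flatten_nil]
          rw [hL', hfl, List.nil_append, he0' hn0]
          exact descList_head? hac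
        · obtain ⟨m, rfl⟩ : ∃ m, n = m + 1 := ⟨n - 1, by omega⟩
          have hS1 := hS' 0
          have hS1ne : S (Fin.succ 0) ≠ [] := by
            intro hnil; rw [hnil] at hS1; exact absurd hS1.1 (by simp)
          have h1 : L' = S (Fin.succ 0) ++
              ((List.ofFn fun i : Fin m => S i.succ.succ).flatten ++ descList a e) := by
            rw [hL', List.ofFn_succ, List.flatten_cons, List.append_assoc]
          rw [h1, List.head?_append_of_ne_nil _ hS1ne, hS1.1, hB0' 0 rfl]
      obtain ⟨d, hL'last⟩ := Option.isSome_iff_exists.mp (List.getLast?_isSome.mpr hL'ne)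
      -- decompose S 0 as b :: t₀
      obtain ⟨t₀, ht₀⟩ : ∃ t, S ⟨0, Nat.succ_pos n⟩ = b :: t := by
        have := hS0.1
        rw [hb] at this
        exact ⟨(S ⟨0, Nat.succ_pos n⟩).tail, (List.cons_head?_tail this).symm⟩
      -- δ = formPerm (b :: L') * σ₀
      have hδ : (S ⟨0, Nat.succ_pos n⟩ ++ L').formPerm =
          (b :: L').formPerm * (S ⟨0, Nat.succ_pos n⟩).formPerm := by
        rw [ht₀, List.cons_append]
        rw [ht₀, List.cons_append] at hLnd
        exact formPerm_cons_append t₀ b L' hLnd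
      -- α = α₀ * formPerm (b :: ascList a c)
      have hανδ : (ascList a b).formPerm =
          (ascList (A ⟨0, Nat.succ_pos n⟩) (B ⟨0, Nat.succ_pos n⟩)).formPerm *
            (b :: ascList a c).formPerm := by
        have hab : a ≤ b := by omega
        have hsplit : ascList a (b - 1) = ascList a c ++ ascList (c + 1) (b - 1) :=
          ascList_split c (by omega) (by omega)
        have hnd2 : (b :: (ascList a c ++ ascList (c + 1) (b - 1))).Nodup := by
          rw [← hsplit]
          exact List.nodup_cons.mpr
            ⟨fun hm => by rw [mem_ascList] at hm; omega, nodup_ascList⟩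
        rw [formPerm_ascList_rot hab, hsplit, formPerm_cons_append _ b _ hnd2]
        congr 1
        have hc1 : c + 1 = A ⟨0, Nat.succ_pos n⟩ := by omega
        have h2 : ascList (c + 1) b = ascList (A ⟨0, Nat.succ_pos n⟩) (B ⟨0, Nat.succ_pos n⟩) := by
          rw [hc1, hb]
        rw [← h2, formPerm_ascList_rot (show c + 1 ≤ b by omega)]
      -- Lemma A application
      have hA : (b :: ascList a c).formPerm * (b :: L').formPerm =
          (ascList a c).formPerm * L'.formPerm := by
        refine formPerm_cons_mul_formPerm_cons b c d (ascList a c) L' ?_ ?_ ?_ hL'last hL'head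
        · exact List.nodup_cons.mpr ⟨fun hm => by rw [mem_ascList] at hm; omega, nodup_ascList⟩
        · refine List.nodup_cons.mpr ⟨fun hm => ?_, hL'nd⟩
          have := (hL'mem b).mp hm
          omega
        · exact ascList_getLast? hac
      calc (ascList a b).formPerm * (S ⟨0, Nat.succ_pos n⟩ ++ L').formPerm
          = (ascList (A ⟨0, Nat.succ_pos n⟩) (B ⟨0, Nat.succ_pos n⟩)).formPerm *
              ((b :: ascList a c).formPerm * (b :: L').formPerm) *
              (S ⟨0, Nat.succ_pos n⟩).formPerm := by
            rw [hανδ, hδ]; group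
        _ = (ascList (A ⟨0, Nat.succ_pos n⟩) (B ⟨0, Nat.succ_pos n⟩)).formPerm *
              ((ascList a c).formPerm * L'.formPerm) *
              (S ⟨0, Nat.succ_pos n⟩).formPerm := by rw [hA]
        _ = (ascList (A ⟨0, Nat.succ_pos n⟩) (B ⟨0, Nat.succ_pos n⟩)).formPerm *
              ((List.ofFn fun i : Fin n =>
                (ascList (A i.succ) (B i.succ)).formPerm * (S i.succ).formPerm).prod) *
              (S ⟨0, Nat.succ_pos n⟩).formPerm := by rw [hihr]
        _ = ((ascList (A ⟨0, Nat.succ_pos n⟩) (B ⟨0, Nat.succ_pos n⟩)).formPerm *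
              (S ⟨0, Nat.succ_pos n⟩).formPerm) *
              (List.ofFn fun i : Fin n =>
                (ascList (A i.succ) (B i.succ)).formPerm * (S i.succ).formPerm).prod := by
            rw [mul_assoc, mul_assoc, ← hcomm.eq]

/-- **The packing-cycle lemma.**
Suppose `I₁ = [A 0, B 0], …, I_r = [A (r-1), B (r-1)]` is a packing of `[a, b]` with valid
sequences `S 0, …, S (r-1)`, and let `δ` be the packing cycle, i.e. the cycle obtained by
juxtaposing the `S i` in order followed by the free space `[a, A (r-1) - 1]` in decreasing
order.  Set `βᵢ := (A i, A i + 1, …, B i)·(S i)`.  Then the `βᵢ` are disjoint permutations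
and `(a, a+1, …, b)·δ = β₀ β₁ ⋯ β_{r-1}`. -/
theorem packing_cycle (a b : ℤ) (hab : a ≤ b) (r : ℕ) (hr : 0 < r)
    (A B : Fin r → ℤ) (hAB : ∀ i, A i ≤ B i)
    (hB0 : B ⟨0, hr⟩ = b)
    (hchain : ∀ i : ℕ, ∀ hi : i + 1 < r, B ⟨i + 1, hi⟩ = A ⟨i, by omega⟩ - 1)
    (hfree : a ≤ A ⟨r - 1, by omega⟩)
    (S : Fin r → List ℤ) (hS : ∀ i, ValidSeq (A i) (B i) (S i)) :
    (∀ i j : Fin r, i ≠ j →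
      ((ascList (A i) (B i)).formPerm * (S i).formPerm).Disjoint
        ((ascList (A j) (B j)).formPerm * (S j).formPerm)) ∧
    (ascList a b).formPerm *
        ((List.ofFn S).flatten ++ descList a (A ⟨r - 1, by omega⟩)).formPerm =
      (List.ofFn (fun i => (ascList (A i) (B i)).formPerm * (S i).formPerm)).prod := by

  have hfix : ∀ (k : Fin r) (z : ℤ), ¬(A k ≤ z ∧ z ≤ B k) →
      ((ascList (A k) (B k)).formPerm * (S k).formPerm) z = z := by
    intro k z hzk
    have h2 : (S k).formPerm z = z :=
      List.formPerm_apply_of_notMem (by rw [(hS k).2.2, Finset.mem_Icc]; exact hzk)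
    have h1 : (ascList (A k) (B k)).formPerm z = z :=
      List.formPerm_apply_of_notMem (by rw [mem_ascList]; exact hzk)
    rw [Equiv.Perm.mul_apply, h2, h1]
  constructor
  · intro i j hne z
    rcases lt_trichotomy (i : ℕ) (j : ℕ) with h | h | h
    · by_cases hz : A j ≤ z ∧ z ≤ B j
      · left
        apply hfix
        have hBA := chainB A B hAB hchain (j : ℕ) j.isLt (i : ℕ) h
        rw [Fin.eta, Fin.eta] at hBA
        omega
      · right; exact hfix j z hz
    · exact absurd (Fin.ext h) hne
    · by_cases hz : A i ≤ z ∧ z ≤ B i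
      · right
        apply hfix
        have hBA := chainB A B hAB hchain (i : ℕ) i.isLt (j : ℕ) h
        rw [Fin.eta, Fin.eta] at hBA
        omega
      · left; exact hfix i z hz
  · refine aux r a b (A ⟨r - 1, by omega⟩) A B S hfree hAB ?_ (by omega) hchain ?_ hS
    · intro i hi
      have hieq : i = ⟨0, hr⟩ := Fin.ext hi
      rw [hieq]
      exact hB0
    · intro i hi
      exact congrArg A (Fin.ext hi.symm)
end

section
/- Let X be a finite set and γ, δ ∈ Sym(X). Suppose x, y are distinct elements of X such that: (a) δ fixes neither x nor y; (b) γ(x) belongs to the orbit of x under γδ; and (c) both y and γ(y) are fixed by γδ. Then there exists δ' ∈ Sym(X), conjugate to δ by a transposition, such that γδ' agrees with γδ outside the set O ∪ {y, γ(y)}, where O is the γδ-orbit of x, and O ∪ {y, γ(y)} forms a single orbit of γδ' of size 2 + |O|. -/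
open Equiv

private lemma sc_fixed_eq {X : Type*} {σ : Equiv.Perm X} {a b : X}
    (h : σ.SameCycle a b) (hbfix : σ b = b) : a = b := by
  obtain ⟨i, hi⟩ := h
  have h2 : (σ ^ i) b = b := Equiv.Perm.zpow_apply_eq_self_of_apply_eq_self hbfix i
  exact (σ ^ i).injective (hi.trans h2.symm)

/-- **Rebuilding long cycles.**
Let `γ, δ` be permutations of a finite set `X` and let `x ≠ y` in `X` satisfy:
(a) `δ` fixes neither `x` nor `y`; (b) `γ x` lies in the `γδ`-orbit of `x`; and
(c) `y` and `γ y` are both fixed by `γδ`.  Then there is a permutation `δ'`, conjugate to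
`δ` by a transposition, such that `γδ'` agrees with `γδ` outside `O ∪ {y, γ y}` (where `O`
is the `γδ`-orbit of `x`), and `O ∪ {y, γ y}` forms a single `γδ'`-orbit of size
`2 + |O|`. -/
theorem rebuild_long_cycles {X : Type*} [Fintype X] [DecidableEq X]
    (γ δ : Equiv.Perm X) (x y : X) (hxy : x ≠ y)
    (ha1 : δ x ≠ x) (ha2 : δ y ≠ y)
    (hb : (γ * δ).SameCycle x (γ x))
    (hc1 : (γ * δ) y = y) (hc2 : (γ * δ) (γ y) = γ y) :
    ∃ δ' : Equiv.Perm X,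
      (∃ u v : X, u ≠ v ∧ δ' = Equiv.swap u v * δ * Equiv.swap u v) ∧
      (∀ z : X, z ∉ ({w | (γ * δ).SameCycle x w} ∪ {y, γ y} : Set X) →
        (γ * δ') z = (γ * δ) z) ∧
      ({w | (γ * δ').SameCycle x w} : Set X) =
        ({w | (γ * δ).SameCycle x w} ∪ {y, γ y} : Set X) ∧
      (({w | (γ * δ).SameCycle x w} ∪ {y, γ y} : Set X)).ncard =
        2 + ({w | (γ * δ).SameCycle x w} : Set X).ncard := by
  classical
  set σ : Equiv.Perm X := γ * δ with hσ
  set O : Set X := {w | σ.SameCycle x w} with hO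
  set S : Set X := O ∪ {y, γ y} with hS
  -- basic pointwise facts
  have hδy : δ y = γ⁻¹ y := by
    apply γ.injective
    simpa [hσ] using hc1
  have hδγy : δ (γ y) = y := by
    have : γ (δ (γ y)) = γ y := hc2
    exact γ.injective (by rw [this])
  have hγy_ne_y : γ y ≠ y := by
    intro h
    apply ha2
    rw [hδy, ← h, Equiv.Perm.inv_def, Equiv.symm_apply_apply]
    exact h.symm
  have hγx_ne_y : γ x ≠ y := by
    intro h
    exact hxy (sc_fixed_eq (h ▸ hb) hc1)
  have hγy_ne_x : γ y ≠ x := by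
    intro h
    have hδx : δ x = y := by rw [← h, hδγy]
    have hσx : σ x = x := by
      show γ (δ x) = x; rw [hδx, h]
    have hγxx : γ x = x := sc_fixed_eq hb.symm hσx
    exact hxy (γ.injective (hγxx.trans h.symm))
  have hδx_ne_y : δ x ≠ y := by
    intro h
    have hσx : σ x = γ y := by show γ (δ x) = γ y; rw [h]
    have : x = γ y := by
      have hsc : σ.SameCycle x (γ y) := ⟨1, by simpa using hσx⟩
      exact sc_fixed_eq hsc hc2
    exact hγy_ne_x this.symm
  -- the new permutation
  set δ' : Equiv.Perm X := Equiv.swap x y * δ * Equiv.swap x y with hδ'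
  set σ' : Equiv.Perm X := γ * δ' with hσ'
  have hσ'app : ∀ z, σ' z = γ (Equiv.swap x y (δ (Equiv.swap x y z))) := by
    intro z; simp [hσ', hδ', Equiv.Perm.mul_apply]
  have hγinvy_ne_x : γ⁻¹ y ≠ x := fun h => hγx_ne_y (by rw [← h]; simp)
  have hγinvy_ne_y : γ⁻¹ y ≠ y := fun h => hγy_ne_y (by conv_lhs => rw [← h]; simp)
  -- key values of σ'
  have hA : σ' x = y := by
    rw [hσ'app, Equiv.swap_apply_left, hδy,
      Equiv.swap_apply_of_ne_of_ne hγinvy_ne_x hγinvy_ne_y]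
    simp
  have hB : σ' y = σ x := by
    rw [hσ'app, Equiv.swap_apply_right, Equiv.swap_apply_of_ne_of_ne ha1 hδx_ne_y]
    rfl
  have hC : σ' (γ y) = γ x := by
    rw [hσ'app, Equiv.swap_apply_of_ne_of_ne hγy_ne_x hγy_ne_y, hδγy,
      Equiv.swap_apply_right]
  have hd_ne_x : δ⁻¹ x ≠ x := fun h => ha1 (by conv_lhs => rw [← h]; simp)
  have hd_ne_y : δ⁻¹ x ≠ y := by
    intro h
    apply hγx_ne_y
    have : δ y = x := by rw [← h]; simp
    rw [hδy] at this
    rw [← this]; simp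
  have hd_ne_γy : δ⁻¹ x ≠ γ y := by
    intro h
    have : δ (γ y) = x := by rw [← h]; simp
    rw [hδγy] at this; exact hxy this.symm
  have hD : σ' (δ⁻¹ x) = γ y := by
    rw [hσ'app, Equiv.swap_apply_of_ne_of_ne hd_ne_x hd_ne_y]
    simp [Equiv.swap_apply_left]
  have hE : ∀ z, z ≠ x → z ≠ y → z ≠ γ y → z ≠ δ⁻¹ x → σ' z = σ z := by
    intro z h1 h2 h3 h4
    rw [hσ'app, Equiv.swap_apply_of_ne_of_ne h1 h2]
    have hne1 : δ z ≠ x := fun h => h4 (by rw [← h]; simp)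
    have hne2 : δ z ≠ y := fun h => h3 (δ.injective (h.trans hδγy.symm) ▸ rfl)
    rw [Equiv.swap_apply_of_ne_of_ne hne1 hne2]
    rfl
  -- membership facts
  have hxO : x ∈ O := Equiv.Perm.SameCycle.refl σ x
  have hy_notin_O : y ∉ O := fun h => hxy (sc_fixed_eq h hc1)
  have hγy_notin_O : γ y ∉ O := fun h => hγy_ne_x (sc_fixed_eq h hc2).symm
  have hdO : δ⁻¹ x ∈ O := by
    have h1 : σ (δ⁻¹ x) = γ x := by show γ (δ (δ⁻¹ x)) = γ x; simp
    exact hb.trans ⟨-1, by rw [zpow_neg_one, ← h1, Equiv.Perm.inv_def, Equiv.symm_apply_apply]⟩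
  have hσO : ∀ w ∈ O, σ w ∈ O := fun w hw => hw.trans ⟨1, by simp⟩
  -- forward: σ' maps S into S
  have hS_inv : ∀ z ∈ S, σ' z ∈ S := by
    intro z hz
    by_cases h1 : z = x
    · subst h1; rw [hA]; right; left; rfl
    by_cases h2 : z = y
    · subst h2; rw [hB]; left; exact hσO x hxO
    by_cases h3 : z = γ y
    · subst h3; rw [hC]; left; exact hb
    by_cases h4 : z = δ⁻¹ x
    · subst h4; rw [hD]; right; right; rfl
    · rw [hE z h1 h2 h3 h4]
      rcases hz with hz | hz
      · exact Or.inl (hσO z hz)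
      · rcases hz with hz | hz
        · exact absurd hz h2
        · exact absurd hz h3
  have hxS : x ∈ S := Or.inl hxO
  have hpow_mem : ∀ n : ℕ, (σ' ^ n) x ∈ S := by
    intro n
    induction n with
    | zero => simpa using hxS
    | succ n ih =>
        rw [pow_succ', Equiv.Perm.mul_apply]
        exact hS_inv _ ih
  -- backward: every element of O is σ'-same-cycle with x
  have hstep : ∀ w ∈ O, σ'.SameCycle x w → σ'.SameCycle x (σ w) := by
    intro w hwO hw
    by_cases h1 : w = x
    · rw [h1]
      have heq : σ x = σ' (σ' x) := by rw [hA, hB]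
      rw [heq]
      exact ⟨2, by rw [zpow_two, Equiv.Perm.mul_apply]⟩
    by_cases h4 : w = δ⁻¹ x
    · rw [h4] at hw ⊢
      have hσw : σ (δ⁻¹ x) = γ x := by show γ (δ (δ⁻¹ x)) = γ x; simp
      have heq : σ (δ⁻¹ x) = σ' (σ' (δ⁻¹ x)) := by rw [hD, hC, hσw]
      rw [heq]
      exact hw.trans ⟨2, by rw [zpow_two, Equiv.Perm.mul_apply]⟩
    · have h2 : w ≠ y := fun h => hy_notin_O (h ▸ hwO)
      have h3 : w ≠ γ y := fun h => hγy_notin_O (h ▸ hwO)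
      rw [← hE w h1 h2 h3 h4]
      exact hw.trans ⟨1, by simp⟩
  have hO_sub : ∀ w ∈ O, σ'.SameCycle x w := by
    intro w hw
    obtain ⟨i, _, hi⟩ := hw.exists_pow_eq'
    have key : ∀ n : ℕ, σ'.SameCycle x ((σ ^ n) x) := by
      intro n
      induction n with
      | zero => simpa using Equiv.Perm.SameCycle.refl σ' x
      | succ n ih =>
          rw [pow_succ', Equiv.Perm.mul_apply]
          refine hstep _ ?_ ih
          exact ⟨(n : ℤ), by simp⟩
    exact hi ▸ key i
  have hscγy : σ'.SameCycle x (γ y) := (hO_sub _ hdO).trans ⟨1, by simpa using hD⟩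
  have hscy : σ'.SameCycle x y := ⟨1, by simpa using hA⟩
  -- orbit equality
  have horbit : ({w | σ'.SameCycle x w} : Set X) = S := by
    ext w
    constructor
    · intro hw
      obtain ⟨i, _, hi⟩ := (hw : σ'.SameCycle x w).exists_pow_eq'
      exact hi ▸ hpow_mem i
    · intro hw
      rcases hw with hw | hw
      · exact hO_sub w hw
      · rcases hw with hw | hw
        · exact hw ▸ hscy
        · exact hw ▸ hscγy
  -- cardinality
  have hdisj : Disjoint O ({y, γ y} : Set X) := by
    rw [Set.disjoint_iff_forall_ne]
    rintro a ha b hb rfl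
    rcases hb with hb | hb
    · exact hy_notin_O (hb ▸ ha)
    · exact hγy_notin_O (hb ▸ ha)
  have hy_ne_γy : y ≠ γ y := fun h => hγy_ne_y h.symm
  have hcard : S.ncard = 2 + O.ncard := by
    rw [hS, Set.ncard_union_eq hdisj (Set.toFinite _) (Set.toFinite _),
      Set.ncard_pair hy_ne_γy]
    omega
  exact ⟨δ', ⟨x, y, hxy, rfl⟩,
    fun z hz => hE z (fun h => hz (Or.inl (h ▸ hxO))) (fun h => hz (Or.inr (Or.inl h)))
      (fun h => hz (Or.inr (Or.inr h))) (fun h => hz (Or.inl (h ▸ hdO))),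
    horbit, hcard⟩
end

section
/- For every ε > 0 there exists N = N₁(ε) > 0 such that for all n ≥ N, if a₁, a₂, …, a_m are pairwise distinct positive integers with a₁ + a₂ + ⋯ + a_m = n, then a₁·a₂⋯a_m < e^{εn}. -/
set_option maxHeartbeats 1000000

/-- A finset of positive naturals of cardinality `c` has sum at least `c(c+1)/2`. -/
lemma aux_card_mul_le_two_sum : ∀ (S : Finset ℕ), 0 ∉ S →
    S.card * (S.card + 1) ≤ 2 * ∑ x ∈ S, x := by
  intro S
  induction S using Finset.strongInduction with
  | _ S ih =>
    intro h0
    rcases S.eq_empty_or_nonempty with rfl | hS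
    · simp
    · set M := S.max' hS with hMdef
      have hM : M ∈ S := S.max'_mem hS
      have hsub : S ⊆ Finset.Icc 1 M := fun x hx =>
        Finset.mem_Icc.mpr ⟨Nat.one_le_iff_ne_zero.mpr (by rintro rfl; exact h0 hx),
          S.le_max' x hx⟩
      have hcard : S.card ≤ M := by
        have := Finset.card_le_card hsub
        simpa using this
      have ih' := ih (S.erase M) (Finset.erase_ssubset hM)
        (fun h => h0 (Finset.mem_of_mem_erase h))
      have hce : (S.erase M).card = S.card - 1 := Finset.card_erase_of_mem hM
      have hsum : ∑ x ∈ S, x = M + ∑ x ∈ S.erase M, x := (Finset.add_sum_erase _ _ hM).symm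
      have hc1 : 1 ≤ S.card := Finset.card_pos.mpr hS
      obtain ⟨k, hk⟩ : ∃ k, S.card = k + 1 := ⟨S.card - 1, by omega⟩
      rw [hce, hk] at ih'
      simp only [Nat.add_sub_cancel] at ih'
      rw [hsum, hk]
      nlinarith [hcard, ih']

/-- **Products of distinct positive integers with fixed sum are subexponential.**
For all `ε > 0` there exists `N > 0` such that if `n ≥ N` and `a₁, …, a_m` are pairwise
distinct positive integers with `a₁ + ⋯ + a_m = n`, then `a₁ ⋯ a_m < e^{εn}`. -/
theorem prod_distinct_lt_exp (ε : ℝ) (hε : 0 < ε) :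
    ∃ N : ℕ, 0 < N ∧ ∀ n : ℕ, N ≤ n → ∀ m : ℕ, ∀ a : Fin m → ℕ,
      Function.Injective a → (∀ i, 0 < a i) → (∑ i, a i) = n →
      ((∏ i, a i : ℕ) : ℝ) < Real.exp (ε * n) := by
  set c : ℝ := 8 / ε with hcdef
  have hc : 0 < c := by positivity
  refine ⟨⌈c ^ 4⌉₊ + 1, Nat.succ_pos _, ?_⟩
  intro n hn m a hinj hpos hsum
  have hn1 : 1 ≤ n := le_trans (Nat.succ_le_succ (Nat.zero_le _)) hn
  have hn0R : (0:ℝ) < n := by exact_mod_cast hn1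
  -- `c^4 < n`
  have hcn : c ^ 4 < (n : ℝ) := by
    have h1 : c ^ 4 ≤ (⌈c ^ 4⌉₊ : ℝ) := Nat.le_ceil _
    have h2 : (⌈c ^ 4⌉₊ : ℝ) < (n : ℝ) := by exact_mod_cast hn
    linarith
  -- the image finset
  set S : Finset ℕ := Finset.image a Finset.univ with hSdef
  have hScard : S.card = m := by
    rw [hSdef, Finset.card_image_of_injective _ hinj, Finset.card_univ, Fintype.card_fin]
  have hSsum : ∑ x ∈ S, x = n := by
    rw [hSdef, Finset.sum_image (fun i _ j _ h => hinj h)]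
    exact hsum
  have h0S : 0 ∉ S := by
    rw [hSdef]
    simp only [Finset.mem_image, Finset.mem_univ, true_and, not_exists]
    intro i h
    exact absurd h (hpos i).ne'
  have hmn : m * (m + 1) ≤ 2 * n := by
    have := aux_card_mul_le_two_sum S h0S
    rwa [hScard, hSsum] at this
  -- each a i ≤ n
  have hle : ∀ i, a i ≤ n := by
    intro i
    calc a i ≤ ∑ j, a j := Finset.single_le_sum (fun j _ => Nat.zero_le _) (Finset.mem_univ i)
    _ = n := hsum
  -- product bound
  have hprodN : (∏ i, a i) ≤ n ^ m := by
    calc (∏ i, a i) ≤ ∏ _i : Fin m, n := Finset.prod_le_prod' (fun i _ => hle i)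
    _ = n ^ m := by rw [Finset.prod_const, Finset.card_univ, Fintype.card_fin]
  have hprodR : ((∏ i, a i : ℕ) : ℝ) ≤ (n : ℝ) ^ m := by exact_mod_cast hprodN
  have hexp : (n : ℝ) ^ m = Real.exp ((m : ℝ) * Real.log n) := by
    rw [Real.exp_nat_mul, Real.exp_log hn0R]
  -- analytic part
  set s : ℝ := Real.sqrt n with hsdef
  set t : ℝ := Real.sqrt s with htdef
  have hs2 : s ^ 2 = (n : ℝ) := Real.sq_sqrt hn0R.le
  have hs0 : 0 ≤ s := Real.sqrt_nonneg _
  have ht2 : t ^ 2 = s := Real.sq_sqrt hs0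
  have ht0 : 0 ≤ t := Real.sqrt_nonneg _
  have hs1 : 1 ≤ s := by nlinarith [hn0R, hs2, (by exact_mod_cast hn1 : (1:ℝ) ≤ n)]
  have ht1 : 1 ≤ t := by nlinarith
  -- m ≤ 2 s
  have hmR : (m : ℝ) ^ 2 ≤ 2 * (n : ℝ) := by
    have : (m : ℝ) * ((m : ℝ) + 1) ≤ 2 * n := by exact_mod_cast hmn
    nlinarith [Nat.cast_nonneg (α := ℝ) m]
  have hm2s : (m : ℝ) ≤ 2 * s := by
    nlinarith [Nat.cast_nonneg (α := ℝ) m, hs2]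
  -- log n ≤ 4 t
  have hlog4 : Real.log n = 4 * Real.log t := by
    rw [htdef, hsdef, Real.log_sqrt hs0, Real.log_sqrt hn0R.le]
    ring
  have hlogt : Real.log t ≤ t := Real.log_le_self ht0
  have hlogn : Real.log n ≤ 4 * t := by rw [hlog4]; linarith
  have hlogn0 : 0 ≤ Real.log n := Real.log_nonneg (by exact_mod_cast hn1)
  -- key bound : m * log n ≤ 8 t^3
  have hkey : (m : ℝ) * Real.log n ≤ 8 * t ^ 3 := by
    have h := mul_le_mul hm2s hlogn hlogn0 (by positivity)
    have : 2 * s * (4 * t) = 8 * t ^ 3 := by rw [← ht2]; ring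
    linarith [h, this.le, this.ge]
  -- c < t
  have hct : c < t := by
    have h1 : Real.sqrt (c ^ 4) = c ^ 2 := by
      rw [show c ^ 4 = (c ^ 2) ^ 2 by ring, Real.sqrt_sq (by positivity)]
    have h2 : Real.sqrt (c ^ 2) = c := Real.sqrt_sq hc.le
    have h3 : Real.sqrt (c ^ 4) < s := by
      rw [hsdef]; exact Real.sqrt_lt_sqrt (by positivity) hcn
    rw [h1] at h3
    have h4 : Real.sqrt (c ^ 2) < t := by
      rw [htdef]; exact Real.sqrt_lt_sqrt (by positivity) h3
    rwa [h2] at h4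
  have hεt : 8 < ε * t := by
    have : ε * c = 8 := by rw [hcdef]; field_simp [hε.ne']
    nlinarith
  have hnt4 : (n : ℝ) = t ^ 4 := by rw [← hs2, ← ht2]; ring
  have hfin : (m : ℝ) * Real.log n < ε * n := by
    have ht3 : 0 < t ^ 3 := by positivity
    have h8 : t ^ 3 * 8 < t ^ 3 * (ε * t) := mul_lt_mul_of_pos_left hεt ht3
    calc (m : ℝ) * Real.log n ≤ 8 * t ^ 3 := hkey
    _ < ε * t ^ 4 := by nlinarith [h8]
    _ = ε * n := by rw [hnt4]
  calc ((∏ i, a i : ℕ) : ℝ) ≤ (n : ℝ) ^ m := hprodR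
  _ = Real.exp ((m : ℝ) * Real.log n) := hexp
  _ < Real.exp (ε * n) := Real.exp_lt_exp.mpr hfin
end

section
/- Let m ≥ 3 be an odd integer and let h ∈ S_m be an m-cycle. Then every permutation σ ∈ S_m satisfying σhσ⁻¹ = h⁻¹ is an even permutation if m ≡ 1 (mod 4), and is an odd permutation if m ≡ 3 (mod 4). -/
open Equiv

private lemma addLeft_one_pow (m : ℕ) (k : ℕ) :
    (Equiv.addLeft (1 : ZMod m)) ^ k = Equiv.addLeft (k : ZMod m) := by
  rw [show (Equiv.addLeft (1 : ZMod m)) ^ k = Equiv.addLeft (k • (1 : ZMod m)) by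
    induction k with
    | zero => ext x; simp
    | succ k ih => rw [pow_succ, ih]; ext x; simp [Perm.mul_apply]]
  congr 1
  simp

private lemma isCycle_addLeft_one (m : ℕ) [NeZero m] (hm : 2 ≤ m) :
    (Equiv.addLeft (1 : ZMod m)).IsCycle := by
  haveI : Fact (1 < m) := ⟨by omega⟩
  refine ⟨0, by simp, fun y _ => ?_⟩
  refine ⟨(y.val : ℤ), ?_⟩
  rw [zpow_natCast, addLeft_one_pow]
  simp [ZMod.natCast_rightInverse y]

private lemma support_addLeft_one (m : ℕ) [NeZero m] (hm : 2 ≤ m) :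
    (Equiv.addLeft (1 : ZMod m)).support = Finset.univ := by
  haveI : Fact (1 < m) := ⟨by omega⟩
  ext x
  simp only [Equiv.Perm.mem_support, Finset.mem_univ, iff_true]
  intro hx
  have hx' : (1 : ZMod m) + x = x := hx
  exact one_ne_zero (right_eq_add.mp hx'.symm)

private lemma sign_addLeft_one (m : ℕ) [NeZero m] (hm : 2 ≤ m) (hodd : Odd m) :
    Equiv.Perm.sign (Equiv.addLeft (1 : ZMod m)) = 1 := by
  rw [(isCycle_addLeft_one m hm).sign, support_addLeft_one m hm]
  simp [ZMod.card, hodd.neg_one_pow]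

private lemma sign_neg_zmod (m : ℕ) [NeZero m] (hm : 3 ≤ m) (hodd : Odd m) :
    Equiv.Perm.sign (Equiv.neg (ZMod m)) = (-1 : ℤˣ) ^ (m / 2) := by
  set τ : Equiv.Perm (ZMod m) := Equiv.neg (ZMod m) with hτ
  have h2 : τ ^ 2 = 1 := by
    ext x; simp [hτ, sq, Perm.mul_apply]
  have htwo : ((2 : ℕ) : ZMod m) ≠ 0 := by
    intro h0
    have hdvd := (ZMod.natCast_eq_zero_iff 2 m).mp h0
    have hle := Nat.le_of_dvd (by norm_num) hdvd
    obtain ⟨k, hk⟩ := hodd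
    omega
  have hne : τ ≠ 1 := by
    intro h1
    have : τ 1 = 1 := by rw [h1]; rfl
    have h11 : (-1 : ZMod m) = 1 := this
    apply htwo
    push_cast
    linear_combination -h11
  have horder : orderOf τ = 2 := orderOf_eq_prime h2 hne
  obtain ⟨n, hn⟩ := Equiv.Perm.cycleType_prime_order (by rw [horder]; exact Nat.prime_two)
  rw [horder] at hn
  -- support of τ is the complement of {0}
  have hsupp : τ.support = {(0 : ZMod m)}ᶜ := by
    ext x
    simp only [Equiv.Perm.mem_support, Finset.mem_compl, Finset.mem_singleton]
    constructor
    · intro hx h0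
      exact hx (by simp [hτ, h0])
    · intro hx hnx
      apply hx
      have h2x : (2 : ZMod m) * x = 0 := by
        have : -x = x := hnx
        linear_combination -this
      have hu : IsUnit ((2 : ℕ) : ZMod m) := by
        rw [ZMod.isUnit_iff_coprime]
        exact Nat.coprime_two_left.mpr hodd
      rw [Nat.cast_ofNat] at hu
      exact (hu.mul_right_eq_zero).mp h2x
  have hcard : τ.support.card = m - 1 := by
    rw [hsupp, Finset.card_compl, Finset.card_singleton]
    simp [ZMod.card]
  have hsum : 2 * (n + 1) = m - 1 := by
    have := τ.sum_cycleType
    rw [hn, Multiset.sum_replicate, smul_eq_mul, hcard] at this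
    omega
  have hexp : m / 2 = n + 1 := by omega
  rw [Equiv.Perm.sign_of_cycleType, hn]
  simp only [Multiset.sum_replicate, Multiset.card_replicate, smul_eq_mul]
  rw [hexp]
  have : (n + 1) * 2 + (n + 1) = 2 * (n + 1) + (n + 1) := by ring
  rw [this, pow_add, pow_mul]
  simp

private lemma key_zmod (m : ℕ) [NeZero m] (hm : 3 ≤ m) (hodd : Odd m) (τ : Equiv.Perm (ZMod m))
    (hτ : τ * Equiv.addLeft 1 * τ⁻¹ = (Equiv.addLeft (1 : ZMod m))⁻¹) :
    Equiv.Perm.sign τ = (-1 : ℤˣ) ^ (m / 2) := by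
  have hstep : ∀ x : ZMod m, τ (1 + x) = -1 + τ x := by
    intro x
    have h' : τ * Equiv.addLeft 1 = (Equiv.addLeft (1 : ZMod m))⁻¹ * τ := by
      rw [← hτ]; group
    have := congrFun (congrArg (fun p : Equiv.Perm (ZMod m) => (p : ZMod m → ZMod m)) h') x
    simpa [Equiv.Perm.mul_apply] using this
  have hk : ∀ k : ℕ, τ ((k : ZMod m)) = τ 0 - (k : ZMod m) := by
    intro k
    induction k with
    | zero => simp
    | succ k ih =>
      have : ((k + 1 : ℕ) : ZMod m) = 1 + (k : ZMod m) := by push_cast; ring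
      rw [this, hstep, ih]
      ring
  have hdecomp : τ = Equiv.addLeft (τ 0) * Equiv.neg (ZMod m) := by
    ext x
    obtain ⟨k, rfl⟩ := ZMod.natCast_zmod_surjective x
    rw [hk k]
    simp [Equiv.Perm.mul_apply, sub_eq_add_neg]
  rw [hdecomp, map_mul]
  have h0 : Equiv.addLeft (τ 0) = (Equiv.addLeft (1 : ZMod m)) ^ (τ 0).val := by
    rw [addLeft_one_pow]
    congr 1
    exact (ZMod.natCast_rightInverse (τ 0)).symm
  rw [h0, map_pow, sign_addLeft_one m (by omega) hodd, one_pow, one_mul,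
    sign_neg_zmod m hm hodd]

/-- **Parity of permutations inverting a long cycle.**
Let `m ≥ 3` be odd and `h ∈ S_m` an `m`-cycle.  Any `σ ∈ S_m` with `σhσ⁻¹ = h⁻¹` is even
if `m ≡ 1 (mod 4)` and odd if `m ≡ 3 (mod 4)`. -/
theorem sign_of_inverting_perm (m : ℕ) (hm : 3 ≤ m) (hodd : Odd m)
    (h : Equiv.Perm (Fin m)) (hc : h.IsCycle) (hsupp : h.support.card = m) :
    ∀ σ : Equiv.Perm (Fin m), σ * h * σ⁻¹ = h⁻¹ →
      (m % 4 = 1 → Equiv.Perm.sign σ = 1) ∧ (m % 4 = 3 → Equiv.Perm.sign σ = -1) := by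
  haveI : NeZero m := ⟨by omega⟩
  intro σ hσ
  -- transport to `ZMod m`
  have ecard : Fintype.card (ZMod m) = Fintype.card (Fin m) := by simp [ZMod.card]
  let e : ZMod m ≃ Fin m := Fintype.equivOfCardEq ecard
  have hmul : ∀ p q : Equiv.Perm (ZMod m),
      e.permCongr (p * q) = e.permCongr p * e.permCongr q := by
    intro p q; ext x; simp [Equiv.Perm.mul_apply]
  have hmonoid : ∃ φ : Equiv.Perm (ZMod m) →* Equiv.Perm (Fin m),
      ∀ p, φ p = e.permCongr p := by
    refine ⟨{ toFun := fun p => e.permCongr p, map_one' := ?_, map_mul' := hmul }, fun p => rfl⟩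
    ext x; simp
  obtain ⟨φ, hφ⟩ := hmonoid
  -- the concrete cycle
  set c : Equiv.Perm (Fin m) := e.permCongr (Equiv.addLeft 1) with hcdef
  have hcc : c.IsCycle := by
    obtain ⟨x, hx1, hx2⟩ := isCycle_addLeft_one m (by omega)
    refine ⟨e x, by simpa [hcdef] using fun hh => hx1 (e.injective hh), fun y hy => ?_⟩
    have hy' : Equiv.addLeft (1 : ZMod m) (e.symm y) ≠ e.symm y := by
      intro hh
      apply hy
      simp [hcdef, hh]
    obtain ⟨i, hi⟩ := hx2 hy'
    refine ⟨i, ?_⟩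
    have hpow : ∀ j : ℤ, c ^ j = e.permCongr ((Equiv.addLeft (1 : ZMod m)) ^ j) := by
      intro j
      rw [hcdef, ← hφ, ← hφ, ← map_zpow]
    rw [hpow i]
    simp only [Equiv.permCongr_apply, Equiv.symm_apply_apply]
    rw [hi]
    simp
  have hcsupp : c.support.card = m := by
    have : c.support = Finset.univ.image e := by
      ext y
      simp only [Equiv.Perm.mem_support, Finset.mem_image, Finset.mem_univ, true_and]
      constructor
      · intro hy
        exact ⟨e.symm y, by simp⟩
      · rintro ⟨x, rfl⟩
        intro hh
        have hx : Equiv.addLeft (1 : ZMod m) x = x := by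
          have := e.injective (by simpa [hcdef] using hh)
          simpa using this
        have := support_addLeft_one m (by omega)
        have hxmem : x ∈ (Equiv.addLeft (1 : ZMod m)).support := by
          rw [this]; exact Finset.mem_univ x
        exact (Equiv.Perm.mem_support.mp hxmem) hx
    rw [this, Finset.card_image_of_injective _ e.injective]
    simp
  -- conjugate h to c
  obtain ⟨π, hπ⟩ := isConj_iff.mp (hcc.isConj hc (by rw [hcsupp, hsupp]))
  -- the transported inverting permutation
  set τ : Equiv.Perm (Fin m) := π⁻¹ * σ * π with hτdef
  have hτc : τ * c * τ⁻¹ = c⁻¹ := by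
    have hh : c = π⁻¹ * h * π := by rw [← hπ]; group
    rw [hτdef, hh]
    simp only [mul_inv_rev, inv_inv]
    calc π⁻¹ * σ * π * (π⁻¹ * h * π) * (π⁻¹ * σ⁻¹ * π)
        = π⁻¹ * (σ * h * σ⁻¹) * π := by group
      _ = π⁻¹ * h⁻¹ * π := by rw [hσ]
      _ = (π⁻¹ * h * π)⁻¹ := by group
  -- move to ZMod m
  set τ' : Equiv.Perm (ZMod m) := e.symm.permCongr τ with hτ'def
  have hφτ : φ τ' = τ := by
    rw [hφ, hτ'def]
    ext x; simp
  have hτ'r : τ' * Equiv.addLeft 1 * τ'⁻¹ = (Equiv.addLeft (1 : ZMod m))⁻¹ := by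
    have hinj : Function.Injective φ := by
      intro a b hab
      rw [hφ, hφ] at hab
      exact (e.permCongr.injective hab)
    apply hinj
    rw [map_mul, map_mul, map_inv, map_inv, hφτ, hφ]
    rw [← hcdef]
    exact hτc
  have hsign : Equiv.Perm.sign τ' = (-1 : ℤˣ) ^ (m / 2) :=
    key_zmod m hm hodd τ' hτ'r
  have hsignσ : Equiv.Perm.sign σ = (-1 : ℤˣ) ^ (m / 2) := by
    have h1 : Equiv.Perm.sign τ' = Equiv.Perm.sign τ := by
      rw [hτ'def]
      exact Equiv.Perm.sign_permCongr e.symm τ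
    have h2 : Equiv.Perm.sign τ = Equiv.Perm.sign σ := by
      rw [hτdef, map_mul, map_mul, map_inv,
        mul_comm ((Equiv.Perm.sign π)⁻¹) (Equiv.Perm.sign σ), mul_assoc,
        inv_mul_cancel, mul_one]
    rw [← h2, ← h1, hsign]
  constructor
  · intro h4
    rw [hsignσ]
    have : Even (m / 2) := ⟨m / 4, by omega⟩
    exact this.neg_one_pow
  · intro h4
    rw [hsignσ]
    have : Odd (m / 2) := ⟨m / 4, by omega⟩
    exact this.neg_one_pow
end
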